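/- arXiv:1803.02319 — 8 statements merged into one kernel-verified Lean document; each statement's English description precedes it below -/
import Mathlib

section
/- Let T be a finite indecomposable partially ordered set and let P be a subset of T that is indecomposable (with the induced order) with 4 ≤ |P| ≤ |T| − 2. Then there is an indecomposable subset U of T with P ⊂ U ⊆ T and |U| = |P| + 2. -/
/-- `A` is an order-autonomous subset of `S` (with the induced order on `S`):
every element of `S \ A` relates to all elements of `A` in the same way. -/
def IsOrderAutonomousIn {α : Type*} [PartialOrder α] (S A : Set α) : Prop :=
  A ⊆ S ∧ ∀ t ∈ S \ A, ∀ a₁ ∈ A, ∀ a₂ ∈ A, (t < a₁ ↔ t < a₂) ∧ (a₁ < t ↔ a₂ < t)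

/-- `S` is indecomposable (as a poset with the induced order): it has no
order-autonomous subset `A` with `2 ≤ |A|` and `A ≠ S`. -/
def IsIndecomposableSubset {α : Type*} [PartialOrder α] (S : Set α) : Prop :=
  ∀ A : Set α, IsOrderAutonomousIn S A → A.Subsingleton ∨ A = S

/-- The poset `α` is indecomposable. -/
def IsIndecomposablePoset (α : Type*) [PartialOrder α] : Prop :=
  IsIndecomposableSubset (Set.univ : Set α)

/-- `S = L ⊕ U`: nonempty `L`, `U` with everything in `L` strictly below everything in `U`. -/
def IsSeriesDecomposable {α : Type*} [PartialOrder α] (S : Set α) : Prop :=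
  ∃ L U : Set α, L.Nonempty ∧ U.Nonempty ∧ L ∪ U = S ∧ Disjoint L U ∧
    ∀ l ∈ L, ∀ u ∈ U, l < u

/-- `F` is a fence from `x` to `y`: an enumeration `f₁, …, fₙ` with `f₁ = x`, `fₙ = y`,
whose only strict comparabilities are between consecutive elements, alternating in
direction. -/
def IsFenceFrom {α : Type*} [PartialOrder α] (F : Set α) (x y : α) : Prop :=
  ∃ n : ℕ, ∃ f : Fin (n + 1) → α, Function.Injective f ∧ Set.range f = F ∧
    f 0 = x ∧ f (Fin.last n) = y ∧
    (∀ i j : Fin (n + 1), i.val + 1 < j.val → ¬ f i ≤ f j ∧ ¬ f j ≤ f i) ∧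
    ((∀ i : Fin n, if i.val % 2 = 0 then f i.castSucc < f i.succ
        else f i.succ < f i.castSucc) ∨
     (∀ i : Fin n, if i.val % 2 = 0 then f i.succ < f i.castSucc
        else f i.castSucc < f i.succ))

/-- The class `𝒳` of triples `(P, a, b)` of Definition "classX". -/
inductive InX {α : Type*} [PartialOrder α] : Set α → α → α → Prop
  /-- `P` is an `N`, i.e. `u < b > a < v` with no other comparabilities. -/
  | base {u a b v : α} (hub : u < b) (hab : a < b) (hav : a < v)
      (hua : ¬ u ≤ a ∧ ¬ a ≤ u) (huv : ¬ u ≤ v ∧ ¬ v ≤ u) (hbv : ¬ b ≤ v ∧ ¬ v ≤ b) :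
      InX {u, a, b, v} a b
  /-- attach a new minimal element `a` below `P \ {ã}`, incomparable to `ã`. -/
  | addMin {P : Set α} {a' b a : α} (h : InX P a' b) (ha : a ∉ P)
      (hlt : ∀ p ∈ P \ {a'}, a < p) (hinc : ¬ a ≤ a' ∧ ¬ a' ≤ a) :
      InX (insert a P) a b
  /-- attach a new maximal element `b` above `P \ {b̃}`, incomparable to `b̃`. -/
  | addMax {P : Set α} {a b' b : α} (h : InX P a b') (hb : b ∉ P)
      (hgt : ∀ p ∈ P \ {b'}, p < b) (hinc : ¬ b ≤ b' ∧ ¬ b' ≤ b) :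
      InX (insert b P) a b

/-- The comparability graph of a poset. -/
def compGraph (α : Type*) [PartialOrder α] : SimpleGraph α where
  Adj x y := x ≠ y ∧ (x ≤ y ∨ y ≤ x)
  symm := ⟨fun x y hxy => ⟨hxy.1.symm, hxy.2.symm⟩⟩
  loopless := ⟨fun x hx => hx.1 rfl⟩

/-- The poset `β` is an indecomposable V-cover with minimal elements `l` and `d`,
distinguished elements `a` and `b`, fence `F` from `b` to `h` with `h` maximal in `F`:
the strict upper bounds of `l` are exactly `{a} ∪ F` with `a` incomparable to all of `F`
(so the comparability components of that set are `{a}` and `F`), and the strict upper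
bounds of `d` are exactly `{h}`. -/
def IsIndecVCover {β : Type*} [PartialOrder β] (l d a b h : β) (F : Set β) : Prop :=
  l ≠ d ∧ IsMin l ∧ IsMin d ∧ (∀ x : β, IsMin x → x = l ∨ x = d) ∧
  {x : β | l < x} = insert a F ∧ a ∉ F ∧
  (∀ f ∈ F, ¬ a ≤ f ∧ ¬ f ≤ a) ∧
  IsFenceFrom F b h ∧ (∀ f ∈ F, ¬ h < f) ∧
  {x : β | d < x} = {h}
section SchmerlTrotterAux

open Set

variable {α : Type*} [PartialOrder α]

/-- `t` relates to `a` and `b` in the same way. -/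
def STSame (t a b : α) : Prop := (t < a ↔ t < b) ∧ (a < t ↔ b < t)

/-- `u` relates uniformly to all elements of `P`. -/
def STUnif (P : Set α) (u : α) : Prop := ∀ a ∈ P, ∀ b ∈ P, STSame u a b

/-- `u` is a copy of `x` over `P`: every other element of `P` relates to `x` and `u` alike. -/
def STCop (P : Set α) (x u : α) : Prop := ∀ t ∈ P, t ≠ x → STSame t x u

lemma STSame.refl (t a : α) : STSame t a a := ⟨Iff.rfl, Iff.rfl⟩

lemma STSame.symm {t a b : α} (h : STSame t a b) : STSame t b a := ⟨h.1.symm, h.2.symm⟩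

lemma STSame.trans {t a b c : α} (h : STSame t a b) (h' : STSame t b c) : STSame t a c :=
  ⟨h.1.trans h'.1, h.2.trans h'.2⟩

/-- Restriction of an autonomous set to a smaller ambient set. -/
lemma auton_inter {S W M : Set α} (hM : IsOrderAutonomousIn S M) (hW : W ⊆ S) :
    IsOrderAutonomousIn W (M ∩ W) := by
  refine ⟨inter_subset_right, ?_⟩
  rintro t ⟨htW, htM⟩ a ⟨haM, -⟩ b ⟨hbM, -⟩
  exact hM.2 t ⟨hW htW, fun h => htM ⟨h, htW⟩⟩ a haM b hbM

lemma auton_of_subset {S W M : Set α} (hM : IsOrderAutonomousIn S M) (hWS : W ⊆ S)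
    (hMW : M ⊆ W) : IsOrderAutonomousIn W M :=
  ⟨hMW, fun t ht => hM.2 t ⟨hWS ht.1, ht.2⟩⟩

lemma not_indec_of_module {S M : Set α} (hM : IsOrderAutonomousIn S M)
    (hns : ¬ M.Subsingleton) (hne : M ≠ S) : ¬ IsIndecomposableSubset S :=
  fun h => (h M hM).elim hns hne

lemma unif_module {P : Set α} {u : α} (hu : u ∉ P) (hU : STUnif P u) :
    IsOrderAutonomousIn (insert u P) P := by
  refine ⟨subset_insert _ _, ?_⟩
  rintro t ⟨ht, htP⟩ a ha b hb
  rcases (mem_insert_iff.1 ht) with rfl | h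
  · exact hU a ha b hb
  · exact absurd h htP

lemma cop_module {P : Set α} {x u : α} (hx : x ∈ P) (hu : u ∉ P) (hC : STCop P x u) :
    IsOrderAutonomousIn (insert u P) {x, u} := by
  refine ⟨by rintro a (rfl | rfl); exacts [mem_insert_of_mem _ hx, mem_insert _ _], ?_⟩
  rintro t ⟨ht, htM⟩ a ha b hb
  have htu : t ≠ u := fun h => htM (h ▸ mem_insert_iff.2 (Or.inr rfl))
  have htP : t ∈ P := (mem_insert_iff.1 ht).resolve_left htu
  have htx : t ≠ x := fun h => htM (h ▸ mem_insert _ _)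
  have hs : STSame t x u := hC t htP htx
  rcases ha with rfl | rfl <;> rcases hb with rfl | rfl
  · exact STSame.refl _ _
  · exact hs
  · exact hs.symm
  · exact STSame.refl _ _

lemma unif_not_indec {P : Set α} {u : α} (hnt : P.Nontrivial) (hu : u ∉ P) (hU : STUnif P u) :
    ¬ IsIndecomposableSubset (insert u P) :=
  not_indec_of_module (unif_module hu hU) hnt.not_subsingleton
    (fun h => hu (h.symm ▸ mem_insert u P))

lemma cop_not_indec {P : Set α} {x u : α} (hnt : P.Nontrivial) (hx : x ∈ P) (hu : u ∉ P)
    (hC : STCop P x u) : ¬ IsIndecomposableSubset (insert u P) := by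
  refine not_indec_of_module (cop_module hx hu hC) ?_ ?_
  · intro h
    exact hu (h (show x ∈ ({x, u} : Set α) from Or.inl rfl)
      (show u ∈ ({x, u} : Set α) from Or.inr rfl) ▸ hx)
  · intro h
    obtain ⟨y, hy, hyx⟩ := hnt.exists_ne x
    have : y ∈ ({x, u} : Set α) := h.symm ▸ mem_insert_of_mem _ hy
    rcases this with rfl | rfl
    · exact hyx rfl
    · exact hu hy

/-- An element cannot be both uniform over `P` and a copy of some `x ∈ P`, if `|P| ≥ 3`. -/
lemma unif_cop_false {P : Set α} {x u : α} (hP : IsIndecomposableSubset P)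
    (hbig : ∀ a b : α, ∃ z ∈ P, z ≠ a ∧ z ≠ b) (hx : x ∈ P) (hu : u ∉ P)
    (hU : STUnif P u) (hC : STCop P x u) : False := by
  have hmod : IsOrderAutonomousIn P (P \ {x}) := by
    refine ⟨diff_subset, ?_⟩
    rintro t ⟨htP, htM⟩ a ⟨haP, hax⟩ b ⟨hbP, hbx⟩
    have htx : t = x := by
      by_contra h
      exact htM ⟨htP, h⟩
    subst htx
    have ha := hC a haP hax
    have hb := hC b hbP hbx
    have hab := hU a haP b hbP
    constructor
    · rw [ha.2, hb.2]; exact hab.1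
    · rw [ha.1, hb.1]; exact hab.2
  rcases hP _ hmod with hss | heq
  · obtain ⟨z, hz, hzx, -⟩ := hbig x x
    obtain ⟨z', hz', hz'x, hz'z⟩ := hbig x z
    exact hz'z (hss ⟨hz', hz'x⟩ ⟨hz, hzx⟩)
  · have : x ∈ P \ {x} := heq.symm ▸ hx
    exact this.2 rfl

/-- An element cannot be a copy of two distinct elements of `P`, if `|P| ≥ 3`. -/
lemma cop_cop_false {P : Set α} {x y u : α} (hP : IsIndecomposableSubset P)
    (hbig : ∀ a b : α, ∃ z ∈ P, z ≠ a ∧ z ≠ b) (hx : x ∈ P) (hy : y ∈ P) (hxy : x ≠ y)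
    (hu : u ∉ P) (hCx : STCop P x u) (hCy : STCop P y u) : False := by
  have hmod : IsOrderAutonomousIn P {x, y} := by
    refine ⟨by rintro a (rfl | rfl) <;> assumption, ?_⟩
    rintro t ⟨htP, htM⟩ a ha b hb
    have htx : t ≠ x := fun h => htM (h ▸ mem_insert _ _)
    have hty : t ≠ y := fun h => htM (h ▸ mem_insert_of_mem _ rfl)
    have hsx : STSame t x u := hCx t htP htx
    have hsy : STSame t y u := hCy t htP hty
    have hxy' : STSame t x y := hsx.trans hsy.symm
    rcases ha with rfl | rfl <;> rcases hb with rfl | rfl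
    · exact STSame.refl _ _
    · exact hxy'
    · exact hxy'.symm
    · exact STSame.refl _ _
  rcases hP _ hmod with hss | heq
  · exact hxy (hss (Or.inl rfl) (Or.inr rfl))
  · obtain ⟨z, hz, hzx, hzy⟩ := hbig x y
    have : z ∈ ({x, y} : Set α) := heq.symm ▸ hz
    rcases this with rfl | rfl
    · exact hzx rfl
    · exact hzy rfl

/-- Classification of an element outside `P` whose one-point extension is decomposable. -/
lemma classify {P : Set α} {u : α} (hP : IsIndecomposableSubset P) (hu : u ∉ P)
    (hnd : ¬ IsIndecomposableSubset (insert u P)) : STUnif P u ∨ ∃ x ∈ P, STCop P x u := by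
  simp only [IsIndecomposableSubset, not_forall] at hnd
  push_neg at hnd
  obtain ⟨M, hM, hss, hne⟩ := hnd
  rcases hP _ (auton_inter hM (subset_insert _ _)) with h1 | h1
  · -- M ∩ P is a subsingleton
    right
    have huM : u ∈ M := by
      by_contra huM
      have : M ⊆ P := fun m hm => ((mem_insert_iff.1 (hM.1 hm)).resolve_left
        (fun h => huM (h ▸ hm)))
      exact hss.not_subsingleton (fun a ha b hb => h1 ⟨ha, this ha⟩ ⟨hb, this hb⟩)
    obtain ⟨x, hxM, hxu⟩ : ∃ x ∈ M, x ≠ u := by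
      by_contra h
      push_neg at h
      exact hss.not_subsingleton fun a ha b hb => (h a ha).trans (h b hb).symm
    have hxP : x ∈ P := (mem_insert_iff.1 (hM.1 hxM)).resolve_left hxu
    refine ⟨x, hxP, fun t htP htx => ?_⟩
    have htM : t ∉ M := by
      intro htM
      have htP' : t ∈ M ∩ P := ⟨htM, htP⟩
      exact htx (h1 htP' ⟨hxM, hxP⟩)
    exact hM.2 t ⟨mem_insert_of_mem _ htP, htM⟩ x hxM u huM
  · -- M ∩ P = P
    left
    have hPM : P ⊆ M := fun p hp => (show p ∈ M ∩ P from h1.symm ▸ hp).1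
    have hMeq : M = P := by
      by_cases huM : u ∈ M
      · exact absurd (Subset.antisymm hM.1 (insert_subset huM hPM)) hne
      · refine Subset.antisymm (fun m hm => ?_) hPM
        exact (mem_insert_iff.1 (hM.1 hm)).resolve_left (fun h => huM (h ▸ hm))
    intro a ha b hb
    exact hM.2 u ⟨mem_insert _ _, fun h => hu (hMeq ▸ h)⟩ a (hMeq.symm ▸ ha) b (hMeq.symm ▸ hb)

end SchmerlTrotterAux
section SchmerlTrotterPair

open Set

variable {α : Type*} [PartialOrder α]

/-- Shapes of a nontrivial autonomous subset of a two-point extension. -/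
lemma pairCases {P : Set α} {u w : α} (hP : IsIndecomposableSubset P)
    (hu : u ∉ P) (hw : w ∉ P) (huw : u ≠ w)
    (hnd : ¬ IsIndecomposableSubset (insert u (insert w P))) :
    ∃ M, IsOrderAutonomousIn (insert u (insert w P)) M ∧ ¬ M.Subsingleton ∧
      (M = P ∨ M = insert u P ∨ M = insert w P ∨ (∃ x ∈ P, M = {x, u}) ∨
        (∃ x ∈ P, M = {x, w}) ∨ (∃ x ∈ P, M = {x, u, w}) ∨ M = {u, w}) := by
  simp only [IsIndecomposableSubset, not_forall] at hnd
  push_neg at hnd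
  obtain ⟨M, hM, hss, hne⟩ := hnd
  have hPZ : P ⊆ insert u (insert w P) := (subset_insert _ _).trans (subset_insert _ _)
  refine ⟨M, hM, hss.not_subsingleton, ?_⟩
  have hmem : ∀ m ∈ M, m = u ∨ m = w ∨ m ∈ P := by
    intro m hm
    have := hM.1 hm
    simp only [mem_insert_iff] at this
    exact this
  rcases hP _ (auton_inter hM hPZ) with h1 | h1
  · -- M ∩ P subsingleton
    rcases h1.eq_empty_or_singleton with he | ⟨x, he⟩
    · -- M ⊆ {u, w}
      have hsub : ∀ m ∈ M, m = u ∨ m = w := by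
        intro m hm
        rcases hmem m hm with h | h | h
        · exact Or.inl h
        · exact Or.inr h
        · exact absurd (show m ∈ M ∩ P from ⟨hm, h⟩) (he ▸ notMem_empty m)
      have huM : u ∈ M := by
        by_contra huM
        exact hss.not_subsingleton fun a ha b hb =>
          ((hsub a ha).resolve_left (fun h => huM (h ▸ ha))).trans
          ((hsub b hb).resolve_left (fun h => huM (h ▸ hb))).symm
      have hwM : w ∈ M := by
        by_contra hwM
        exact hss.not_subsingleton fun a ha b hb =>
          ((hsub a ha).resolve_right (fun h => hwM (h ▸ ha))).trans
          ((hsub b hb).resolve_right (fun h => hwM (h ▸ hb))).symm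
      refine Or.inr (Or.inr (Or.inr (Or.inr (Or.inr (Or.inr ?_)))))
      refine Subset.antisymm (fun m hm => hsub m hm) ?_
      rintro m (rfl | rfl) <;> assumption
    · -- M ∩ P = {x}
      have hxM : x ∈ M := (show x ∈ M ∩ P from he ▸ rfl).1
      have hxP : x ∈ P := (show x ∈ M ∩ P from he ▸ rfl).2
      have hsub : ∀ m ∈ M, m = u ∨ m = w ∨ m = x := by
        intro m hm
        rcases hmem m hm with h | h | h
        · exact Or.inl h
        · exact Or.inr (Or.inl h)
        · exact Or.inr (Or.inr (show m ∈ ({x} : Set α) from he ▸ ⟨hm, h⟩))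
      by_cases huM : u ∈ M <;> by_cases hwM : w ∈ M
      · refine Or.inr (Or.inr (Or.inr (Or.inr (Or.inr (Or.inl ⟨x, hxP, ?_⟩)))))
        refine Subset.antisymm (fun m hm => ?_) ?_
        · rcases hsub m hm with rfl | rfl | rfl
          · exact Or.inr (Or.inl rfl)
          · exact Or.inr (Or.inr rfl)
          · exact Or.inl rfl
        · rintro m (rfl | rfl | rfl) <;> assumption
      · refine Or.inr (Or.inr (Or.inr (Or.inl ⟨x, hxP, ?_⟩)))
        refine Subset.antisymm (fun m hm => ?_) ?_
        · rcases hsub m hm with rfl | rfl | rfl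
          · exact Or.inr rfl
          · exact absurd hm hwM
          · exact Or.inl rfl
        · rintro m (rfl | rfl) <;> assumption
      · refine Or.inr (Or.inr (Or.inr (Or.inr (Or.inl ⟨x, hxP, ?_⟩))))
        refine Subset.antisymm (fun m hm => ?_) ?_
        · rcases hsub m hm with rfl | rfl | rfl
          · exact absurd hm huM
          · exact Or.inr rfl
          · exact Or.inl rfl
        · rintro m (rfl | rfl) <;> assumption
      · exact absurd (hss.not_subsingleton fun a ha b hb =>
          (((hsub a ha).resolve_left (fun h => huM (h ▸ ha))).resolve_left
            (fun h => hwM (h ▸ ha))).trans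
          ((((hsub b hb).resolve_left (fun h => huM (h ▸ hb))).resolve_left
            (fun h => hwM (h ▸ hb))).symm)) (fun h => h)
  · -- M ∩ P = P
    have hPM : P ⊆ M := fun p hp => (show p ∈ M ∩ P from h1.symm ▸ hp).1
    by_cases huM : u ∈ M <;> by_cases hwM : w ∈ M
    · exact absurd (Subset.antisymm hM.1
        (insert_subset huM (insert_subset hwM hPM))) hne
    · refine Or.inr (Or.inl (Subset.antisymm (fun m hm => ?_)
        (insert_subset huM hPM)))
      rcases hmem m hm with rfl | rfl | h
      · exact mem_insert _ _
      · exact absurd hm hwM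
      · exact mem_insert_of_mem _ h
    · refine Or.inr (Or.inr (Or.inl (Subset.antisymm (fun m hm => ?_)
        (insert_subset hwM hPM))))
      rcases hmem m hm with rfl | rfl | h
      · exact absurd hm huM
      · exact mem_insert _ _
      · exact mem_insert_of_mem _ h
    · refine Or.inl (Subset.antisymm (fun m hm => ?_) hPM)
      rcases hmem m hm with rfl | rfl | h
      · exact absurd hm huM
      · exact absurd hm hwM
      · exact h

end SchmerlTrotterPair
section SchmerlTrotterFacts

open Set

variable {α : Type*} [PartialOrder α]

lemma auton_outsider {S M : Set α} {t : α} (hM : IsOrderAutonomousIn S M) (htS : t ∈ S)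
    (htM : t ∉ M) : ∀ a ∈ M, ∀ b ∈ M, STSame t a b :=
  fun a ha b hb => hM.2 t ⟨htS, htM⟩ a ha b hb

lemma unif_transfer {P : Set α} {u w : α} (h5 : ∀ t ∈ P, STSame t u w) (hUw : STUnif P w) :
    STUnif P u := by
  intro a ha b hb
  obtain ⟨ha1, ha2⟩ := h5 a ha
  obtain ⟨hb1, hb2⟩ := h5 b hb
  obtain ⟨hw1, hw2⟩ := hUw a ha b hb
  exact ⟨ha2.trans (hw1.trans hb2.symm), ha1.trans (hw2.trans hb1.symm)⟩

lemma cop_transfer {P : Set α} {x u w : α} (h5 : ∀ t ∈ P, STSame t u w) (hC : STCop P x w) :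
    STCop P x u := by
  intro t ht htx
  obtain ⟨h1, h2⟩ := h5 t ht
  obtain ⟨c1, c2⟩ := hC t ht htx
  exact ⟨c1.trans h1.symm, c2.trans h2.symm⟩

/-- Fact 1: two exterior elements whose one-point extensions are indecomposable but whose
two-point extension is decomposable are twins over `P`. -/
lemma fact1 {P : Set α} {u w : α} (hP : IsIndecomposableSubset P)
    (hbig : ∀ a b : α, ∃ z ∈ P, z ≠ a ∧ z ≠ b) (hnt : P.Nontrivial)
    (hu : u ∉ P) (hw : w ∉ P) (huw : u ≠ w)
    (hEu : IsIndecomposableSubset (insert u P)) (hEw : IsIndecomposableSubset (insert w P))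
    (hnd : ¬ IsIndecomposableSubset (insert u (insert w P))) :
    ∀ t ∈ P, STSame t u w := by
  obtain ⟨M, hM, hss, hsh⟩ := pairCases hP hu hw huw hnd
  rcases hsh with rfl | rfl | rfl | ⟨x, hxP, rfl⟩ | ⟨x, hxP, rfl⟩ | ⟨x, hxP, rfl⟩ | rfl
  · exact absurd hEu (unif_not_indec hnt hu fun a ha b hb =>
      auton_outsider hM (by simp) hu a ha b hb)
  · exact absurd hEw (unif_not_indec hnt hw fun a ha b hb =>
      auton_outsider hM (by simp) (by simp [hw, huw.symm]) a (by simp [ha]) b (by simp [hb]))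
  · exact absurd hEu (unif_not_indec hnt hu fun a ha b hb =>
      auton_outsider hM (by simp) (by simp [hu, huw]) a (by simp [ha]) b (by simp [hb]))
  · exact absurd hEu (cop_not_indec hnt hxP hu fun t ht htx =>
      auton_outsider hM (by simp [ht]) (by simp [htx, ne_of_mem_of_not_mem ht hu])
        x (by simp) u (by simp))
  · exact absurd hEw (cop_not_indec hnt hxP hw fun t ht htx =>
      auton_outsider hM (by simp [ht]) (by simp [htx, ne_of_mem_of_not_mem ht hw])
        x (by simp) w (by simp))
  · exact absurd hEu (cop_not_indec hnt hxP hu fun t ht htx =>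
      auton_outsider hM (by simp [ht])
        (by simp [htx, ne_of_mem_of_not_mem ht hu, ne_of_mem_of_not_mem ht hw])
        x (by simp) u (by simp))
  · exact fun t ht => auton_outsider hM (by simp [ht])
      (by simp [ne_of_mem_of_not_mem ht hu, ne_of_mem_of_not_mem ht hw]) u (by simp) w (by simp)

/-- Fact 2: an exterior uniform element stays uniform over an indecomposable one-point
extension. -/
lemma fact2 {P : Set α} {u w : α} (hP : IsIndecomposableSubset P)
    (hbig : ∀ a b : α, ∃ z ∈ P, z ≠ a ∧ z ≠ b) (hnt : P.Nontrivial)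
    (hu : u ∉ P) (hw : w ∉ P) (huw : u ≠ w)
    (hEu : IsIndecomposableSubset (insert u P)) (hUw : STUnif P w)
    (hnd : ¬ IsIndecomposableSubset (insert u (insert w P))) :
    ∀ a ∈ insert u P, ∀ b ∈ insert u P, STSame w a b := by
  obtain ⟨M, hM, hss, hsh⟩ := pairCases hP hu hw huw hnd
  rcases hsh with rfl | rfl | rfl | ⟨x, hxP, rfl⟩ | ⟨x, hxP, rfl⟩ | ⟨x, hxP, rfl⟩ | rfl
  · exact absurd hEu (unif_not_indec hnt hu fun a ha b hb =>
      auton_outsider hM (by simp) hu a ha b hb)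
  · exact fun a ha b hb => auton_outsider hM (by simp) (by simp [hw, huw.symm]) a ha b hb
  · exact absurd hEu (unif_not_indec hnt hu fun a ha b hb =>
      auton_outsider hM (by simp) (by simp [hu, huw]) a (by simp [ha]) b (by simp [hb]))
  · exact absurd hEu (cop_not_indec hnt hxP hu fun t ht htx =>
      auton_outsider hM (by simp [ht]) (by simp [htx, ne_of_mem_of_not_mem ht hu])
        x (by simp) u (by simp))
  · exact absurd (unif_cop_false hP hbig hxP hw hUw fun t ht htx =>
      auton_outsider hM (by simp [ht]) (by simp [htx, ne_of_mem_of_not_mem ht hw])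
        x (by simp) w (by simp)) (fun h => h)
  · exact absurd hEu (cop_not_indec hnt hxP hu fun t ht htx =>
      auton_outsider hM (by simp [ht])
        (by simp [htx, ne_of_mem_of_not_mem ht hu, ne_of_mem_of_not_mem ht hw])
        x (by simp) u (by simp))
  · refine absurd hEu (unif_not_indec hnt hu (unif_transfer (fun t ht => ?_) hUw))
    exact auton_outsider hM (by simp [ht])
      (by simp [ne_of_mem_of_not_mem ht hu, ne_of_mem_of_not_mem ht hw]) u (by simp) w (by simp)

/-- Fact 3: an exterior element with indecomposable one-point extension relates to a
copy of `x` as it relates to `x`. -/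
lemma fact3 {P : Set α} {x u w : α} (hP : IsIndecomposableSubset P)
    (hbig : ∀ a b : α, ∃ z ∈ P, z ≠ a ∧ z ≠ b) (hnt : P.Nontrivial)
    (hu : u ∉ P) (hw : w ∉ P) (huw : u ≠ w) (hxP : x ∈ P)
    (hEu : IsIndecomposableSubset (insert u P)) (hCw : STCop P x w)
    (hnd : ¬ IsIndecomposableSubset (insert u (insert w P))) :
    STSame u w x := by
  obtain ⟨M, hM, hss, hsh⟩ := pairCases hP hu hw huw hnd
  rcases hsh with rfl | rfl | rfl | ⟨y, hyP, rfl⟩ | ⟨y, hyP, rfl⟩ | ⟨y, hyP, rfl⟩ | rfl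
  · exact absurd (unif_cop_false hP hbig hxP hw
      (fun a ha b hb => auton_outsider hM (by simp) hw a ha b hb) hCw) (fun h => h)
  · refine absurd (unif_cop_false hP hbig hxP hw (fun a ha b hb => ?_) hCw) (fun h => h)
    exact auton_outsider hM (by simp) (by simp [hw, huw.symm]) a (by simp [ha]) b (by simp [hb])
  · exact absurd hEu (unif_not_indec hnt hu fun a ha b hb =>
      auton_outsider hM (by simp) (by simp [hu, huw]) a (by simp [ha]) b (by simp [hb]))
  · exact absurd hEu (cop_not_indec hnt hyP hu fun t ht hty =>
      auton_outsider hM (by simp [ht]) (by simp [hty, ne_of_mem_of_not_mem ht hu])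
        y (by simp) u (by simp))
  · have hC' : STCop P y w := fun t ht hty =>
      auton_outsider hM (by simp [ht]) (by simp [hty, ne_of_mem_of_not_mem ht hw])
        y (by simp) w (by simp)
    by_cases hyx : y = x
    · subst hyx
      exact auton_outsider hM (by simp) (by simp [huw, ne_of_mem_of_not_mem hyP hu |>.symm])
        w (by simp) y (by simp)
    · exact absurd (cop_cop_false hP hbig hyP hxP hyx hw hC' hCw) (fun h => h)
  · exact absurd hEu (cop_not_indec hnt hyP hu fun t ht hty =>
      auton_outsider hM (by simp [ht])
        (by simp [hty, ne_of_mem_of_not_mem ht hu, ne_of_mem_of_not_mem ht hw])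
        y (by simp) u (by simp))
  · have h5 : ∀ t ∈ P, STSame t u w := fun t ht =>
      auton_outsider hM (by simp [ht])
        (by simp [ne_of_mem_of_not_mem ht hu, ne_of_mem_of_not_mem ht hw]) u (by simp) w (by simp)
    exact absurd hEu (cop_not_indec hnt hxP hu (cop_transfer h5 hCw))

/-- Fact 5: an exterior uniform element relates to a copy of `x` as it relates to `x`. -/
lemma fact5 {P : Set α} {x u w : α} (hP : IsIndecomposableSubset P)
    (hbig : ∀ a b : α, ∃ z ∈ P, z ≠ a ∧ z ≠ b) (hnt : P.Nontrivial)
    (hu : u ∉ P) (hw : w ∉ P) (huw : u ≠ w) (hxP : x ∈ P)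
    (hUu : STUnif P u) (hCw : STCop P x w)
    (hnd : ¬ IsIndecomposableSubset (insert u (insert w P))) :
    STSame u w x := by
  obtain ⟨M, hM, hss, hsh⟩ := pairCases hP hu hw huw hnd
  rcases hsh with rfl | rfl | rfl | ⟨y, hyP, rfl⟩ | ⟨y, hyP, rfl⟩ | ⟨y, hyP, rfl⟩ | rfl
  · exact absurd (unif_cop_false hP hbig hxP hw
      (fun a ha b hb => auton_outsider hM (by simp) hw a ha b hb) hCw) (fun h => h)
  · refine absurd (unif_cop_false hP hbig hxP hw (fun a ha b hb => ?_) hCw) (fun h => h)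
    exact auton_outsider hM (by simp) (by simp [hw, huw.symm]) a (by simp [ha]) b (by simp [hb])
  · exact auton_outsider hM (by simp) (by simp [hu, huw]) w (by simp) x (by simp [hxP])
  · exact absurd (unif_cop_false hP hbig hyP hu hUu fun t ht hty =>
      auton_outsider hM (by simp [ht]) (by simp [hty, ne_of_mem_of_not_mem ht hu])
        y (by simp) u (by simp)) (fun h => h)
  · have hC' : STCop P y w := fun t ht hty =>
      auton_outsider hM (by simp [ht]) (by simp [hty, ne_of_mem_of_not_mem ht hw])
        y (by simp) w (by simp)
    by_cases hyx : y = x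
    · subst hyx
      exact auton_outsider hM (by simp) (by simp [huw, ne_of_mem_of_not_mem hyP hu |>.symm])
        w (by simp) y (by simp)
    · exact absurd (cop_cop_false hP hbig hyP hxP hyx hw hC' hCw) (fun h => h)
  · exact absurd (unif_cop_false hP hbig hyP hu hUu fun t ht hty =>
      auton_outsider hM (by simp [ht])
        (by simp [hty, ne_of_mem_of_not_mem ht hu, ne_of_mem_of_not_mem ht hw])
        y (by simp) u (by simp)) (fun h => h)
  · have h5 : ∀ t ∈ P, STSame t u w := fun t ht =>
      auton_outsider hM (by simp [ht])
        (by simp [ne_of_mem_of_not_mem ht hu, ne_of_mem_of_not_mem ht hw]) u (by simp) w (by simp)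
    exact absurd (unif_cop_false hP hbig hxP hu hUu (cop_transfer h5 hCw)) (fun h => h)

/-- Fact 6: a copy of `y` relates to a copy of `x` (for `x ≠ y`) as it relates to `x`. -/
lemma fact6 {P : Set α} {x y w z : α} (hP : IsIndecomposableSubset P)
    (hbig : ∀ a b : α, ∃ c ∈ P, c ≠ a ∧ c ≠ b) (hnt : P.Nontrivial)
    (hw : w ∉ P) (hz : z ∉ P) (hwz : w ≠ z) (hxP : x ∈ P) (hyP : y ∈ P) (hxy : x ≠ y)
    (hCw : STCop P x w) (hCz : STCop P y z)
    (hnd : ¬ IsIndecomposableSubset (insert w (insert z P))) :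
    STSame z w x := by
  obtain ⟨M, hM, hss, hsh⟩ := pairCases hP hw hz hwz hnd
  rcases hsh with rfl | rfl | rfl | ⟨t, htP, rfl⟩ | ⟨t, htP, rfl⟩ | ⟨t, htP, rfl⟩ | rfl
  · exact absurd (unif_cop_false hP hbig hxP hw
      (fun a ha b hb => auton_outsider hM (by simp) hw a ha b hb) hCw) (fun h => h)
  · refine absurd (unif_cop_false hP hbig hyP hz (fun a ha b hb => ?_) hCz) (fun h => h)
    exact auton_outsider hM (by simp) (by simp [hz, hwz.symm]) a (by simp [ha]) b (by simp [hb])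
  · refine absurd (unif_cop_false hP hbig hxP hw (fun a ha b hb => ?_) hCw) (fun h => h)
    exact auton_outsider hM (by simp) (by simp [hw, hwz]) a (by simp [ha]) b (by simp [hb])
  · have hC' : STCop P t w := fun s hs hst =>
      auton_outsider hM (by simp [hs]) (by simp [hst, ne_of_mem_of_not_mem hs hw])
        t (by simp) w (by simp)
    by_cases htx : t = x
    · subst htx
      exact auton_outsider hM (by simp) (by simp [hwz.symm, ne_of_mem_of_not_mem htP hz |>.symm])
        w (by simp) t (by simp)
    · exact absurd (cop_cop_false hP hbig htP hxP htx hw hC' hCw) (fun h => h)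
  · have hC' : STCop P t z := fun s hs hst =>
      auton_outsider hM (by simp [hs]) (by simp [hst, ne_of_mem_of_not_mem hs hz])
        t (by simp) z (by simp)
    by_cases hty : t = y
    · subst hty
      have hwzy : STSame w z t :=
        auton_outsider hM (by simp) (by simp [hwz, ne_of_mem_of_not_mem htP hw |>.symm])
          z (by simp) t (by simp)
      have hCwy : STSame t x w := hCw t htP (fun h => hxy h.symm)
      have hCzx : STSame x t z := hCz x hxP hxy
      exact ⟨hwzy.2.trans (hCwy.1.symm.trans hCzx.2), hwzy.1.trans (hCwy.2.symm.trans hCzx.1)⟩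
    · exact absurd (cop_cop_false hP hbig htP hyP hty hz hC' hCz) (fun h => h)
  · have hC1 : STCop P t w := fun s hs hst =>
      auton_outsider hM (by simp [hs])
        (by simp [hst, ne_of_mem_of_not_mem hs hw, ne_of_mem_of_not_mem hs hz])
        t (by simp) w (by simp)
    have hC2 : STCop P t z := fun s hs hst =>
      auton_outsider hM (by simp [hs])
        (by simp [hst, ne_of_mem_of_not_mem hs hw, ne_of_mem_of_not_mem hs hz])
        t (by simp) z (by simp)
    by_cases htx : t = x
    · subst htx
      exact absurd (cop_cop_false hP hbig htP hyP hxy hz hC2 hCz) (fun h => h)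
    · exact absurd (cop_cop_false hP hbig htP hxP htx hw hC1 hCw) (fun h => h)
  · have h5 : ∀ t ∈ P, STSame t w z := fun t ht =>
      auton_outsider hM (by simp [ht])
        (by simp [ne_of_mem_of_not_mem ht hw, ne_of_mem_of_not_mem ht hz]) w (by simp) z (by simp)
    have hCxz : STCop P x z := fun t ht htx => (hCw t ht htx).trans (h5 t ht)
    exact absurd (cop_cop_false hP hbig hxP hyP hxy hz hCxz hCz) (fun h => h)

end SchmerlTrotterFacts
open Set in
/-- Schmerl–Trotter. If `T` is a finite indecomposable poset and
`P ⊆ T` is indecomposable with `4 ≤ |P| ≤ |T| - 2`, then there is an indecomposable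
`U` with `P ⊂ U ⊆ T` and `|U| = |P| + 2`. -/
theorem schmerl_trotter {α : Type*} [PartialOrder α] [Fintype α]
    (hT : IsIndecomposablePoset α)
    (P : Set α) (hP : IsIndecomposableSubset P)
    (h4 : 4 ≤ P.ncard) (hle : P.ncard ≤ Fintype.card α - 2) :
    ∃ U : Set α, IsIndecomposableSubset U ∧ P ⊂ U ∧ U.ncard = P.ncard + 2 := by
  classical
  by_contra hcon
  push_neg at hcon
  -- `P` has at least three elements, in a convenient form.
  have hbig : ∀ a b : α, ∃ z ∈ P, z ≠ a ∧ z ≠ b := by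
    intro a b
    by_contra h
    push_neg at h
    have hsub : P ⊆ {a, b} := by
      intro z hz
      rcases eq_or_ne z a with rfl | hza
      · exact Or.inl rfl
      · exact Or.inr (h z hz hza)
    have h1 := Set.ncard_le_ncard hsub (Set.toFinite _)
    have h2 : ({a, b} : Set α).ncard ≤ 2 := by
      refine le_trans (Set.ncard_insert_le _ _) ?_
      simp [Set.ncard_singleton]
    omega
  have hnt : P.Nontrivial := by
    have hne : P.Nonempty := Set.nonempty_of_ncard_ne_zero (by omega)
    obtain ⟨p, hp⟩ := hne
    obtain ⟨z, hz, hzp, -⟩ := hbig p p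
    exact ⟨z, hz, p, hp, hzp⟩
  obtain ⟨p0, hp0⟩ := hnt.nonempty
  -- there are at least two elements outside `P`.
  have hcardP : P.ncard + Pᶜ.ncard = Fintype.card α := by
    rw [← Nat.card_eq_fintype_card]
    exact Set.ncard_add_ncard_compl P
  have hout2 : 1 < Pᶜ.ncard := by omega
  obtain ⟨u0, hu0c, v0, hv0c, huv0⟩ := (Set.one_lt_ncard (Set.toFinite _)).1 hout2
  have hu0 : u0 ∉ P := hu0c
  have hv0 : v0 ∉ P := hv0c
  -- no two-point extension of `P` is indecomposable.
  have key : ∀ u ∉ P, ∀ w ∉ P, u ≠ w →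
      ¬ IsIndecomposableSubset (insert u (insert w P)) := by
    intro u hu w hw huw hind
    have hss : P ⊂ insert u (insert w P) := by
      refine ⟨(subset_insert _ _).trans (subset_insert _ _), fun hsub => hw (hsub ?_)⟩
      exact mem_insert_of_mem _ (mem_insert _ _)
    have hcount : (insert u (insert w P)).ncard = P.ncard + 2 := by
      rw [Set.ncard_insert_of_notMem (by simp [hu, huw]),
        Set.ncard_insert_of_notMem hw]
    exact hcon _ hind hss hcount
  -- classification of exterior elements.
  have hclass : ∀ t, t ∉ P → IsIndecomposableSubset (insert t P) ∨ STUnif P t ∨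
      ∃ x ∈ P, STCop P x t := by
    intro t ht
    by_cases h : IsIndecomposableSubset (insert t P)
    · exact Or.inl h
    · rcases classify hP ht h with h' | h'
      exacts [Or.inr (Or.inl h'), Or.inr (Or.inr h')]
  by_cases hB : ∃ x ∈ P, ∃ w, w ∉ P ∧ STCop P x w
  · -- Case 1: some exterior element is a copy of some `x ∈ P`.
    obtain ⟨x, hx, w0, hw0, hC0⟩ := hB
    set Qs : Set α := {w | w ∉ P ∧ STCop P x w} with hQs
    have hkey : ∀ a ∈ Qs, ∀ t, t ∉ insert x Qs → STSame t a x := by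
      rintro a ⟨haP, hCa⟩ t htQ
      have htx : t ≠ x := fun h => htQ (h ▸ mem_insert _ _)
      have hta : t ≠ a := fun h => htQ (h ▸ mem_insert_of_mem _ ⟨haP, hCa⟩)
      by_cases htP : t ∈ P
      · exact (hCa t htP htx).symm
      · have htnotQ : ¬ STCop P x t := fun hc => htQ (mem_insert_of_mem _ ⟨htP, hc⟩)
        rcases hclass t htP with hE | hU | ⟨y, hy, hCy⟩
        · exact fact3 hP hbig hnt htP haP hta hx hE hCa (key t htP a haP hta)
        · exact fact5 hP hbig hnt htP haP hta hx hU hCa (key t htP a haP hta)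
        · have hyx : y ≠ x := fun h => htnotQ (h ▸ hCy)
          exact fact6 hP hbig hnt haP htP (Ne.symm hta) hx hy (fun h => hyx h.symm)
            hCa hCy (key a haP t htP (Ne.symm hta))
    have hQmod : IsOrderAutonomousIn univ (insert x Qs) := by
      refine ⟨subset_univ _, ?_⟩
      rintro t ⟨-, htQ⟩ a ha b hb
      have hax : STSame t a x := by
        rcases ha with rfl | ha
        · exact STSame.refl _ _
        · exact hkey a ha t htQ
      have hbx : STSame t b x := by
        rcases hb with rfl | hb
        · exact STSame.refl _ _
        · exact hkey b hb t htQ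
      exact hax.trans hbx.symm
    refine not_indec_of_module hQmod ?_ ?_ hT
    · intro h
      have hwx : w0 = x := h (mem_insert_of_mem _ ⟨hw0, hC0⟩) (mem_insert _ _)
      exact hw0 (hwx.symm ▸ hx)
    · intro h
      obtain ⟨y, hy, hyx⟩ := hnt.exists_ne x
      have hyQ : y ∈ insert x Qs := h.symm ▸ mem_univ y
      rcases hyQ with rfl | hyQ
      · exact hyx rfl
      · exact hyQ.1 hy
  · -- Case 2: no exterior element is a copy.
    push_neg at hB
    have hclass2 : ∀ t, t ∉ P → IsIndecomposableSubset (insert t P) ∨ STUnif P t := by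
      intro t ht
      rcases hclass t ht with h | h | ⟨y, hy, hC⟩
      exacts [Or.inl h, Or.inr h, absurd hC (hB y hy t ht)]
    by_cases hE2 : ∃ u, u ∉ P ∧ IsIndecomposableSubset (insert u P) ∧
        ∃ v, v ∉ P ∧ IsIndecomposableSubset (insert v P) ∧ u ≠ v
    · -- Case 2a: at least two exterior one-point extensions are indecomposable.
      obtain ⟨u, hu, hEu, v, hv, hEv, huv⟩ := hE2
      set Es : Set α := {t | t ∉ P ∧ IsIndecomposableSubset (insert t P)} with hEs
      have hmod : IsOrderAutonomousIn univ Es := by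
        refine ⟨subset_univ _, ?_⟩
        rintro t ⟨-, htE⟩ a ⟨haP, hEa⟩ b ⟨hbP, hEb⟩
        rcases eq_or_ne a b with rfl | hab
        · exact STSame.refl _ _
        by_cases htP : t ∈ P
        · exact fact1 hP hbig hnt haP hbP hab hEa hEb (key a haP b hbP hab) t htP
        · have hUt : STUnif P t := (hclass2 t htP).resolve_left (fun h => htE ⟨htP, h⟩)
          have hta : a ≠ t := fun h => htE (h ▸ ⟨haP, hEa⟩)
          have htb : b ≠ t := fun h => htE (h ▸ ⟨hbP, hEb⟩)
          have h2a := fact2 hP hbig hnt haP htP hta hEa hUt (key a haP t htP hta)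
          have h2b := fact2 hP hbig hnt hbP htP htb hEb hUt (key b hbP t htP htb)
          have hsa : STSame t a p0 :=
            h2a a (mem_insert _ _) p0 (mem_insert_of_mem _ hp0)
          have hsb : STSame t b p0 :=
            h2b b (mem_insert _ _) p0 (mem_insert_of_mem _ hp0)
          exact hsa.trans hsb.symm
      refine not_indec_of_module hmod ?_ ?_ hT
      · intro h
        exact huv (h ⟨hu, hEu⟩ ⟨hv, hEv⟩)
      · intro h
        exact (show p0 ∈ Es from h.symm ▸ mem_univ p0).1 hp0
    · by_cases hE1 : ∃ u, u ∉ P ∧ IsIndecomposableSubset (insert u P)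
      · -- Case 2b: exactly one such extension.
        obtain ⟨u, hu, hEu⟩ := hE1
        have huniq : ∀ v, v ∉ P → IsIndecomposableSubset (insert v P) → v = u := by
          intro v hv hEv
          by_contra hne
          exact hE2 ⟨u, hu, hEu, v, hv, hEv, Ne.symm hne⟩
        have hmod : IsOrderAutonomousIn univ (insert u P) := by
          refine ⟨subset_univ _, ?_⟩
          rintro t ⟨-, htM⟩ a ha b hb
          have htP : t ∉ P := fun h => htM (mem_insert_of_mem _ h)
          have htu : t ≠ u := fun h => htM (h ▸ mem_insert _ _)
          have hUt : STUnif P t := by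
            rcases hclass2 t htP with h | h
            · exact absurd (huniq t htP h) htu
            · exact h
          exact fact2 hP hbig hnt hu htP (Ne.symm htu) hEu hUt
            (key u hu t htP (Ne.symm htu)) a ha b hb
        refine not_indec_of_module hmod ?_ ?_ hT
        · intro h
          have : u = p0 := h (mem_insert _ _) (mem_insert_of_mem _ hp0)
          exact hu (this.symm ▸ hp0)
        · intro h
          rcases eq_or_ne u0 u with rfl | hne
          · have hmem : v0 ∈ insert u0 P := h.symm ▸ mem_univ v0
            rcases hmem with rfl | hmem
            · exact huv0 rfl
            · exact hv0 hmem
          · have hmem : u0 ∈ insert u P := h.symm ▸ mem_univ u0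
            rcases hmem with rfl | hmem
            · exact hne rfl
            · exact hu0 hmem
      · -- Case 2c: every exterior element is uniform over `P`.
        push_neg at hE1
        have hmod : IsOrderAutonomousIn univ P := by
          refine ⟨subset_univ _, ?_⟩
          rintro t ⟨-, htP⟩ a ha b hb
          exact ((hclass2 t htP).resolve_left (hE1 t htP)) a ha b hb
        refine not_indec_of_module hmod hnt.not_subsingleton ?_ hT
        intro h
        exact hu0 (show u0 ∈ P from h.symm ▸ mem_univ u0)
end

section
/- Let T be a finite indecomposable partially ordered set with |T| > 2 and let a < b in T be such that the induced subposet T \ {t ∈ T : a < t < b} is series-decomposable. Then there is a subset H of T containing a and b such that (H, a, b) ∈ 𝒳 (with the induced order on H) and H is not isomorphic to the 4-element fence N (equivalently, |H| ≥ 5). -/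
section AuxiliaryLemmas

variable {α : Type*} [PartialOrder α]

/-- Auxiliary: a poset with an element strictly below (or above) all others,
and more than 2 elements, is not indecomposable. -/
lemma no_strict_extreme [Fintype α] (hT : IsIndecomposablePoset α)
    (hcard : 2 < Fintype.card α) (x₀ : α)
    (h : (∀ t, t ≠ x₀ → x₀ < t) ∨ (∀ t, t ≠ x₀ → t < x₀)) : False := by
  have hT' : ∀ A : Set α, IsOrderAutonomousIn Set.univ A →
      A.Subsingleton ∨ A = Set.univ := hT
  have hauto : IsOrderAutonomousIn Set.univ ({x₀}ᶜ : Set α) := by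
    refine ⟨Set.subset_univ _, ?_⟩
    intro t ht y₁ hy₁ y₂ hy₂
    have htx : t = x₀ := by simpa using ht.2
    subst htx
    have hy₁' : y₁ ≠ t := hy₁
    have hy₂' : y₂ ≠ t := hy₂
    rcases h with h | h
    · exact ⟨iff_of_true (h y₁ hy₁') (h y₂ hy₂'),
        iff_of_false (fun hc => lt_asymm hc (h y₁ hy₁'))
          (fun hc => lt_asymm hc (h y₂ hy₂'))⟩
    · exact ⟨iff_of_false (fun hc => lt_asymm hc (h y₁ hy₁'))
          (fun hc => lt_asymm hc (h y₂ hy₂')),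
        iff_of_true (h y₁ hy₁') (h y₂ hy₂')⟩
  rcases hT' _ hauto with hsub | huniv
  · obtain ⟨p, q, s, hpq, hps, hqs⟩ := Fintype.two_lt_card_iff.mp hcard
    have hex2 : ∃ y z : α, y ≠ z ∧ y ≠ x₀ ∧ z ≠ x₀ := by
      by_cases hp : p = x₀
      · exact ⟨q, s, hqs, by rw [← hp]; exact hpq.symm, by rw [← hp]; exact hps.symm⟩
      · by_cases hq : q = x₀
        · exact ⟨p, s, hps, hp, by rw [← hq]; exact hqs.symm⟩
        · exact ⟨p, q, hpq, hp, hq⟩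
    obtain ⟨y, z, hyz, hy, hz⟩ := hex2
    exact hyz (hsub (show y ∈ ({x₀}ᶜ : Set α) from hy) (show z ∈ ({x₀}ᶜ : Set α) from hz))
  · have : x₀ ∈ ({x₀}ᶜ : Set α) := huniv.symm ▸ Set.mem_univ x₀
    exact this rfl

/-- Auxiliary: a zigzag sequence (consecutive entries incomparable, entries at distance
at least two strictly increasing) of length at least 4 yields a member of `𝒳`. -/
lemma X_of_seq :
    ∀ n, 3 ≤ n → ∀ f : ℕ → α,
      (∀ i < n, ¬ f i ≤ f (i+1) ∧ ¬ f (i+1) ≤ f i) →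
      (∀ i j, i + 2 ≤ j → j ≤ n → f i < f j) →
      InX (f '' Set.Iic n) (f 0) (f n) := by
  intro n hn
  induction n, hn using Nat.le_induction with
  | base =>
    intro f hadj hdom
    have hs : f '' Set.Iic 3 = {f 1, f 0, f 3, f 2} := by
      ext x
      simp only [Set.mem_image, Set.mem_Iic, Set.mem_insert_iff, Set.mem_singleton_iff]
      constructor
      · rintro ⟨i, hi, rfl⟩
        interval_cases i <;> tauto
      · rintro (rfl | rfl | rfl | rfl)
        exacts [⟨1, by omega, rfl⟩, ⟨0, by omega, rfl⟩, ⟨3, by omega, rfl⟩, ⟨2, by omega, rfl⟩]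
    rw [hs]
    exact InX.base (hdom 1 3 (by omega) (by omega)) (hdom 0 3 (by omega) (by omega))
      (hdom 0 2 (by omega) (by omega))
      ⟨(hadj 0 (by omega)).2, (hadj 0 (by omega)).1⟩
      (hadj 1 (by omega))
      ⟨(hadj 2 (by omega)).2, (hadj 2 (by omega)).1⟩
  | succ n hn ih =>
    intro f hadj hdom
    have hInX := ih (fun i => f (i+1)) (fun i hi => hadj (i+1) (by omega))
      (fun i j hij hj => hdom (i+1) (j+1) (by omega) (by omega))
    have hset : f '' Set.Iic (n+1) = insert (f 0) ((fun i => f (i+1)) '' Set.Iic n) := by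
      ext x
      simp only [Set.mem_image, Set.mem_Iic, Set.mem_insert_iff]
      constructor
      · rintro ⟨i, hi, rfl⟩
        cases i with
        | zero => exact Or.inl rfl
        | succ i => exact Or.inr ⟨i, by omega, rfl⟩
      · rintro (rfl | ⟨i, hi, rfl⟩)
        exacts [⟨0, by omega, rfl⟩, ⟨i+1, by omega, rfl⟩]
    rw [hset]
    refine InX.addMin hInX ?_ ?_ ?_
    · rintro ⟨i, hi, hfi⟩
      have hi' : i ≤ n := hi
      rcases Nat.eq_zero_or_pos i with h0 | hpos
      · subst h0
        exact (hadj 0 (by omega)).1 (le_of_eq hfi.symm)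
      · exact absurd hfi.symm (hdom 0 (i+1) (by omega) (by omega)).ne
    · rintro p ⟨⟨i, hi, rfl⟩, hne⟩
      have hi' : i ≤ n := hi
      cases i with
      | zero => exact absurd (Set.mem_singleton _) hne
      | succ i => exact hdom 0 (i+1+1) (by omega) (by omega)
    · exact hadj 0 (by omega)

end AuxiliaryLemmas

/-- Lemma `2chnocovlem`. If `T` is finite indecomposable with `|T| > 2`,
`a < b`, and `T \ {t : a < t < b}` is series-decomposable, then `{a, b}` is contained in
an `H ⊆ T` with `(H, a, b) ∈ 𝒳` and `H` not isomorphic to `N`, i.e. `|H| ≥ 5`. -/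
theorem twoChain_noncover_lemma {α : Type*} [PartialOrder α] [Fintype α]
    (hT : IsIndecomposablePoset α) (hcard : 2 < Fintype.card α)
    {a b : α} (hab : a < b)
    (hS : IsSeriesDecomposable (Set.univ \ {t : α | a < t ∧ t < b})) :
    ∃ H : Set α, a ∈ H ∧ b ∈ H ∧ InX H a b ∧ 5 ≤ H.ncard := by
  classical
  have hT' : ∀ A : Set α, IsOrderAutonomousIn Set.univ A →
      A.Subsingleton ∨ A = Set.univ := hT
  obtain ⟨L, U, hLne, hUne, hLU, hdisj, hlu⟩ := hS
  -- every element is in L, in U, or in the open interval (a,b)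
  have hmem : ∀ x : α, x ∈ L ∨ x ∈ U ∨ (a < x ∧ x < b) := by
    intro x
    by_cases hx : a < x ∧ x < b
    · exact Or.inr (Or.inr hx)
    · have hx' : x ∈ L ∪ U := by
        rw [hLU]; exact ⟨Set.mem_univ x, hx⟩
      rcases hx' with h | h
      · exact Or.inl h
      · exact Or.inr (Or.inl h)
  -- Step 1 : a ∈ L
  have haL : a ∈ L := by
    rcases hmem a with h | h | h
    · exact h
    · -- a ∈ U is impossible
      exfalso
      have hLauto : IsOrderAutonomousIn Set.univ L := by
        refine ⟨Set.subset_univ _, ?_⟩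
        intro t ht l₁ hl₁ l₂ hl₂
        have ht' : t ∉ L := ht.2
        have key : ∀ l ∈ L, l < t ∧ ¬ t < l := by
          intro l hl
          rcases hmem t with h' | h' | h'
          · exact absurd h' ht'
          · exact ⟨hlu l hl t h', fun hc => lt_asymm hc (hlu l hl t h')⟩
          · have hla : l < a := hlu l hl a h
            exact ⟨hla.trans h'.1, fun hc => lt_asymm (h'.1.trans hc) hla⟩
        exact ⟨iff_of_false (key l₁ hl₁).2 (key l₂ hl₂).2,
          iff_of_true (key l₁ hl₁).1 (key l₂ hl₂).1⟩
      rcases hT' L hLauto with hsub | huniv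
      · obtain ⟨x₀, hx₀⟩ := hLne
        have hLx : ∀ y ∈ L, y = x₀ := fun y hy => hsub hy hx₀
        have hgmin : ∀ t, t ≠ x₀ → x₀ < t := by
          intro t htne
          rcases hmem t with h' | h' | h'
          · exact absurd (hLx t h') htne
          · exact hlu x₀ hx₀ t h'
          · exact (hlu x₀ hx₀ a h).trans h'.1
        exact no_strict_extreme hT hcard x₀ (Or.inl hgmin)
      · obtain ⟨u, hu⟩ := hUne
        exact Set.disjoint_left.mp hdisj (huniv.symm.subset (Set.mem_univ u)) hu
    · exact absurd h.1 (lt_irrefl a)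
  -- Step 2 : b ∈ U
  have hbU : b ∈ U := by
    rcases hmem b with h | h | h
    · -- b ∈ L is impossible
      exfalso
      have hUauto : IsOrderAutonomousIn Set.univ U := by
        refine ⟨Set.subset_univ _, ?_⟩
        intro t ht u₁ hu₁ u₂ hu₂
        have ht' : t ∉ U := ht.2
        have key : ∀ u ∈ U, t < u ∧ ¬ u < t := by
          intro u hu
          rcases hmem t with h' | h' | h'
          · exact ⟨hlu t h' u hu, fun hc => lt_asymm hc (hlu t h' u hu)⟩
          · exact absurd h' ht'
          · have hbu : b < u := hlu b h u hu
            exact ⟨h'.2.trans hbu, fun hc => lt_asymm (hc.trans h'.2) hbu⟩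
        exact ⟨iff_of_true (key u₁ hu₁).1 (key u₂ hu₂).1,
          iff_of_false (key u₁ hu₁).2 (key u₂ hu₂).2⟩
      rcases hT' U hUauto with hsub | huniv
      · obtain ⟨y₀, hy₀⟩ := hUne
        have hUy : ∀ u ∈ U, u = y₀ := fun u hu => hsub hu hy₀
        have hgmax : ∀ t, t ≠ y₀ → t < y₀ := by
          intro t htne
          rcases hmem t with h' | h' | h'
          · exact hlu t h' y₀ hy₀
          · exact absurd (hUy t h') htne
          · exact h'.2.trans (hlu b h y₀ hy₀)
        exact no_strict_extreme hT hcard y₀ (Or.inr hgmax)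
      · exact Set.disjoint_left.mp hdisj haL (huniv.symm.subset (Set.mem_univ a))
    · exact h
    · exact absurd h.2 (lt_irrefl b)
  -- Structural facts
  have hP1 : ∀ x : α, ¬ a < x → x < b := by
    intro x hx
    rcases hmem x with h' | h' | h'
    · exact hlu x h' b hbU
    · exact absurd (hlu a haL x h') hx
    · exact absurd h'.1 hx
  have hP2 : ∀ x y : α, ¬ a < x → ¬ y < b → x < y := by
    intro x y hx hy
    have hxL : x ∈ L := by
      rcases hmem x with h' | h' | h'
      · exact h'
      · exact absurd (hlu a haL x h') hx
      · exact absurd h'.1 hx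
    have hyU : y ∈ U := by
      rcases hmem y with h' | h' | h'
      · exact absurd (hlu y h' b hbU) hy
      · exact h'
      · exact absurd h'.2 hy
    exact hlu x hxL y hyU
  -- Step 3 : connectivity of the incomparability graph, i.e. b is reachable from a
  have hreach : Relation.ReflTransGen (fun x y : α => ¬ x ≤ y ∧ ¬ y ≤ x) a b := by
    set rr : α → α → Prop := fun x y => ¬ x ≤ y ∧ ¬ y ≤ x with hrr
    have hCauto : IsOrderAutonomousIn Set.univ {x | Relation.ReflTransGen rr a x} := by
      refine ⟨Set.subset_univ _, ?_⟩
      intro t ht c₁ hc₁ c₂ hc₂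
      have htC : ¬ Relation.ReflTransGen rr a t := ht.2
      have key : ∀ c, Relation.ReflTransGen rr a c →
          ((t < c ↔ t < a) ∧ (c < t ↔ a < t)) := by
        intro c hc
        induction hc with
        | refl => exact ⟨Iff.rfl, Iff.rfl⟩
        | @tail y c hay hyc ih =>
          have hyC : Relation.ReflTransGen rr a y := hay
          have hcC : Relation.ReflTransGen rr a c := hay.tail hyc
          have hty : t < y ∨ y < t := by
            have hcomp : y ≤ t ∨ t ≤ y := by
              by_contra hcon
              push_neg at hcon
              exact htC (hyC.tail ⟨hcon.1, hcon.2⟩)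
            have htney : t ≠ y := fun he => htC (he ▸ hyC)
            rcases hcomp with h' | h'
            · exact Or.inr (lt_of_le_of_ne h' (Ne.symm htney))
            · exact Or.inl (lt_of_le_of_ne h' htney)
          have htc : t < c ∨ c < t := by
            have hcomp : c ≤ t ∨ t ≤ c := by
              by_contra hcon
              push_neg at hcon
              exact htC (hcC.tail ⟨hcon.1, hcon.2⟩)
            have htnec : t ≠ c := fun he => htC (he ▸ hcC)
            rcases hcomp with h' | h'
            · exact Or.inr (lt_of_le_of_ne h' (Ne.symm htnec))
            · exact Or.inl (lt_of_le_of_ne h' htnec)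
          have h1 : t < c ↔ t < y := by
            rcases hty with h' | h' <;> rcases htc with h'' | h''
            · exact iff_of_true h'' h'
            · exact absurd (h''.trans h').le hyc.2
            · exact absurd (h'.trans h'').le hyc.1
            · exact iff_of_false (fun hc' => lt_asymm hc' h'') (fun hc' => lt_asymm hc' h')
          have h2 : c < t ↔ y < t := by
            rcases hty with h' | h' <;> rcases htc with h'' | h''
            · exact iff_of_false (fun hc' => lt_asymm hc' h'') (fun hc' => lt_asymm hc' h')
            · exact absurd (h''.trans h').le hyc.2
            · exact absurd (h'.trans h'').le hyc.1
            · exact iff_of_true h'' h'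
          exact ⟨h1.trans ih.1, h2.trans ih.2⟩
      exact ⟨((key c₁ hc₁).1).trans ((key c₂ hc₂).1).symm,
        ((key c₁ hc₁).2).trans ((key c₂ hc₂).2).symm⟩
    rcases hT' _ hCauto with hsub | huniv
    · exfalso
      have hnone : ∀ x, ¬ rr a x := by
        intro x hx
        have hxC : Relation.ReflTransGen rr a x := Relation.ReflTransGen.single hx
        have hxa : x = a := hsub hxC Relation.ReflTransGen.refl
        exact hx.1 (hxa ▸ le_refl a)
      have hcompa : ∀ x : α, x ≤ a ∨ a ≤ x := by
        intro x
        by_contra hcon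
        push_neg at hcon
        exact hnone x ⟨hcon.2, hcon.1⟩
      have hDauto : IsOrderAutonomousIn Set.univ {x | a ≤ x} := by
        refine ⟨Set.subset_univ _, ?_⟩
        intro t ht d₁ hd₁ d₂ hd₂
        have ht2 : ¬ a ≤ t := ht.2
        have hta : t < a := by
          rcases hcompa t with h' | h'
          · exact lt_of_le_of_ne h' (fun he => ht2 (he ▸ le_refl a))
          · exact absurd h' ht2
        have key : ∀ d, a ≤ d → (t < d ∧ ¬ d < t) := by
          intro d hd
          exact ⟨hta.trans_le hd, fun hc => ht2 (hd.trans hc.le)⟩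
        exact ⟨iff_of_true (key d₁ hd₁).1 (key d₂ hd₂).1,
          iff_of_false (key d₁ hd₁).2 (key d₂ hd₂).2⟩
      rcases hT' _ hDauto with hsub' | huniv'
      · exact hab.ne' (hsub' (show b ∈ {x | a ≤ x} from hab.le)
          (show a ∈ {x | a ≤ x} from le_refl a))
      · have hgmin : ∀ t, t ≠ a → a < t := by
          intro t htne
          have : a ≤ t := huniv'.symm.subset (Set.mem_univ t)
          exact lt_of_le_of_ne this (Ne.symm htne)
        exact no_strict_extreme hT hcard a (Or.inl hgmin)
    · exact huniv.symm.subset (Set.mem_univ b)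
  -- Step 4 : extract a walk as a sequence
  have hexgen : ∀ c, Relation.ReflTransGen (fun x y : α => ¬ x ≤ y ∧ ¬ y ≤ x) a c →
      ∃ n : ℕ, ∃ f : ℕ → α, f 0 = a ∧ f n = c ∧
        ∀ i < n, ¬ f i ≤ f (i+1) ∧ ¬ f (i+1) ≤ f i := by
    intro c hc
    induction hc with
    | refl => exact ⟨0, fun _ => a, rfl, rfl, fun i hi => absurd hi (Nat.not_lt_zero i)⟩
    | @tail y c hay hyc ih =>
      obtain ⟨n, f, h0, hn, hadj⟩ := ih
      refine ⟨n + 1, fun i => if i ≤ n then f i else c, ?_, ?_, ?_⟩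
      · show (if 0 ≤ n then f 0 else c) = a
        rw [if_pos (Nat.zero_le n), h0]
      · show (if n + 1 ≤ n then f (n+1) else c) = c
        rw [if_neg (by omega)]
      · intro i hi
        by_cases hin : i < n
        · show (¬ (if i ≤ n then f i else c) ≤ (if i + 1 ≤ n then f (i+1) else c)) ∧
            (¬ (if i + 1 ≤ n then f (i+1) else c) ≤ (if i ≤ n then f i else c))
          rw [if_pos (by omega : i ≤ n), if_pos (by omega : i + 1 ≤ n)]
          exact hadj i hin
        · have hieq : i = n := by omega
          subst hieq
          show (¬ (if i ≤ i then f i else c) ≤ (if i + 1 ≤ i then f (i+1) else c)) ∧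
            (¬ (if i + 1 ≤ i then f (i+1) else c) ≤ (if i ≤ i then f i else c))
          rw [if_pos (le_refl i), if_neg (by omega), hn]
          exact hyc
  have hex : ∃ n : ℕ, ∃ f : ℕ → α, f 0 = a ∧ f n = b ∧
      ∀ i < n, ¬ f i ≤ f (i+1) ∧ ¬ f (i+1) ≤ f i := hexgen b hreach
  obtain ⟨n₀, hfull, hmin⟩ : ∃ n, (∃ f : ℕ → α, f 0 = a ∧ f n = b ∧
      ∀ i < n, ¬ f i ≤ f (i+1) ∧ ¬ f (i+1) ≤ f i) ∧
      ∀ m < n, ¬ ∃ f : ℕ → α, f 0 = a ∧ f m = b ∧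
        ∀ i < m, ¬ f i ≤ f (i+1) ∧ ¬ f (i+1) ≤ f i :=
    ⟨Nat.find hex, Nat.find_spec hex, fun m hm => Nat.find_min hex hm⟩
  obtain ⟨f, hf0, hfn, hadj⟩ := hfull
  -- Step 5 : minimality gives strict comparability at distance ≥ 2
  have hscomp : ∀ i j, i + 1 < j → j ≤ n₀ → f i < f j ∨ f j < f i := by
    intro i j hij hj
    by_contra hcon
    push_neg at hcon
    obtain ⟨h1, h2⟩ := hcon
    by_cases heq : f i = f j
    · refine hmin (n₀ - (j - i)) (by omega)
        ⟨fun k => if k ≤ i then f k else f (k + (j - i)), ?_, ?_, ?_⟩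
      · show (if 0 ≤ i then f 0 else f (0 + (j - i))) = a
        rw [if_pos (Nat.zero_le i), hf0]
      · show (if n₀ - (j - i) ≤ i then f (n₀ - (j - i))
            else f (n₀ - (j - i) + (j - i))) = b
        by_cases hmi : n₀ - (j - i) ≤ i
        · have e1 : n₀ - (j - i) = i := by omega
          have e2 : j = n₀ := by omega
          rw [if_pos hmi, e1, heq, e2, hfn]
        · rw [if_neg hmi, show n₀ - (j - i) + (j - i) = n₀ from by omega, hfn]
      · intro k hk
        show (¬ (if k ≤ i then f k else f (k + (j - i))) ≤
            (if k + 1 ≤ i then f (k+1) else f (k + 1 + (j - i)))) ∧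
          (¬ (if k + 1 ≤ i then f (k+1) else f (k + 1 + (j - i))) ≤
            (if k ≤ i then f k else f (k + (j - i))))
        by_cases hk1 : k + 1 ≤ i
        · rw [if_pos (by omega : k ≤ i), if_pos hk1]
          exact hadj k (by omega)
        · by_cases hk2 : k ≤ i
          · rw [if_pos hk2, if_neg hk1, show k = i from by omega, heq,
              show i + 1 + (j - i) = j + 1 from by omega]
            exact hadj j (by omega)
          · rw [if_neg hk2, if_neg (by omega : ¬ k + 1 ≤ i),
              show k + 1 + (j - i) = (k + (j - i)) + 1 from by omega]
            exact hadj (k + (j - i)) (by omega)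
    · have hr1 : ¬ f i ≤ f j := fun hle => h1 (lt_of_le_of_ne hle heq)
      have hr2 : ¬ f j ≤ f i := fun hle => h2 (lt_of_le_of_ne hle (Ne.symm heq))
      refine hmin (n₀ - (j - i - 1)) (by omega)
        ⟨fun k => if k ≤ i then f k else f (k + (j - i - 1)), ?_, ?_, ?_⟩
      · show (if 0 ≤ i then f 0 else f (0 + (j - i - 1))) = a
        rw [if_pos (Nat.zero_le i), hf0]
      · show (if n₀ - (j - i - 1) ≤ i then f (n₀ - (j - i - 1))
            else f (n₀ - (j - i - 1) + (j - i - 1))) = b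
        rw [if_neg (by omega), show n₀ - (j - i - 1) + (j - i - 1) = n₀ from by omega, hfn]
      · intro k hk
        show (¬ (if k ≤ i then f k else f (k + (j - i - 1))) ≤
            (if k + 1 ≤ i then f (k+1) else f (k + 1 + (j - i - 1)))) ∧
          (¬ (if k + 1 ≤ i then f (k+1) else f (k + 1 + (j - i - 1))) ≤
            (if k ≤ i then f k else f (k + (j - i - 1))))
        by_cases hk1 : k + 1 ≤ i
        · rw [if_pos (by omega : k ≤ i), if_pos hk1]
          exact hadj k (by omega)
        · by_cases hk2 : k ≤ i
          · rw [if_pos hk2, if_neg hk1, show k = i from by omega,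
              show i + 1 + (j - i - 1) = j from by omega]
            exact ⟨hr1, hr2⟩
          · rw [if_neg hk2, if_neg (by omega : ¬ k + 1 ≤ i),
              show k + 1 + (j - i - 1) = (k + (j - i - 1)) + 1 from by omega]
            exact hadj (k + (j - i - 1)) (by omega)
  -- Step 6 : the walk has length at least 4
  have h4 : 4 ≤ n₀ := by
    by_contra hlt
    push_neg at hlt
    interval_cases n₀
    · exact hab.ne (hf0.symm.trans hfn)
    · have h0 := (hadj 0 (by omega)).1
      rw [hf0, hfn] at h0
      exact h0 hab.le
    · have h0 := hadj 0 (by omega)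
      have h1 := hadj 1 (by omega)
      rw [hf0] at h0
      rw [hfn] at h1
      exact h1.1 (hP1 (f 1) (fun hlt' => h0.1 hlt'.le)).le
    · have h0 := hadj 0 (by omega)
      have h1 := hadj 1 (by omega)
      have h2 := hadj 2 (by omega)
      rw [hf0] at h0
      rw [hfn] at h2
      exact h1.1 (hP2 (f 1) (f 2) (fun hlt' => h0.1 hlt'.le)
        (fun hlt' => h2.1 hlt'.le)).le
  -- Step 7 : directions are forced
  have hC1 : ∀ i, i + 2 ≤ n₀ → f i < f n₀ := by
    intro i
    induction i with
    | zero =>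
      intro _
      rw [hf0, hfn]
      exact hab
    | succ i ih =>
      intro h
      rcases hscomp (i+1) n₀ (by omega) le_rfl with h' | h'
      · exact h'
      · exfalso
        have hib : f i < f n₀ := ih (by omega)
        exact (hadj i (by omega)).1 ((hib.trans h').le)
  have hC2 : ∀ d i, 2 ≤ i → i + d = n₀ → a < f i := by
    intro d
    induction d with
    | zero =>
      intro i h2 hi
      rw [show i = n₀ from by omega, hfn]
      exact hab
    | succ d ih =>
      intro i h2 hi
      rcases hscomp 0 i (by omega) (by omega) with h' | h'
      · rw [hf0] at h'
        exact h'
      · exfalso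
        rw [hf0] at h'
        have h2' : a < f (i+1) := ih (i+1) (by omega) (by omega)
        exact (hadj i (by omega)).1 ((h'.trans h2').le)
  have hC2' : ∀ i, 2 ≤ i → i ≤ n₀ → a < f i := fun i h2 hi => hC2 (n₀ - i) i h2 (by omega)
  have hC3 : ∀ i, i + 2 ≤ n₀ → f i < f (i+2) := by
    intro i hi
    rcases hscomp i (i+2) (by omega) hi with h | h
    · exact h
    · exfalso
      have haux : ∀ k, k ≤ i → f (i+2) < f (i - k) := by
        intro k
        induction k with
        | zero =>
          intro _
          simpa using h
        | succ k ihk =>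
          intro hk
          have h1 : f (i+2) < f (i - k) := ihk (by omega)
          rcases hscomp (i - (k+1)) (i+2) (by omega) hi with h' | h'
          · exfalso
            have hadj' := (hadj (i - (k+1)) (by omega)).1
            rw [show i - (k+1) + 1 = i - k from by omega] at hadj'
            exact hadj' (h'.trans h1).le
          · exact h'
      have hfin := haux i le_rfl
      rw [show i - i = 0 from by omega, hf0] at hfin
      exact lt_asymm (hC2' (i+2) (by omega) hi) hfin
  have hC4 : ∀ i j, i + 2 ≤ j → j ≤ n₀ → f i < f j := by
    intro i j hij
    induction j, hij using Nat.le_induction with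
    | base => exact fun hj => hC3 i hj
    | succ j hj ih =>
      intro hj1
      rcases hscomp i (j+1) (by omega) hj1 with h | h
      · exact h
      · exfalso
        have h2 : f i < f j := ih (by omega)
        exact (hadj j (by omega)).2 ((h.trans h2).le)
  -- Step 8 : injectivity and conclusion
  have hkey : ∀ i j, i < j → j ≤ n₀ → f i ≠ f j := by
    intro i j hij hj heq
    by_cases hj1 : j = i + 1
    · subst hj1
      exact (hadj i (by omega)).1 (le_of_eq heq)
    · exact (hC4 i j (by omega) hj).ne heq
  have hinj : Set.InjOn f (Set.Iic n₀) := by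
    intro i hi j hj hfij
    have hi' : i ≤ n₀ := hi
    have hj' : j ≤ n₀ := hj
    by_contra hne
    rcases Ne.lt_or_gt hne with h | h
    · exact hkey i j h hj' hfij
    · exact hkey j i h hi' hfij.symm
  refine ⟨f '' Set.Iic n₀, ⟨0, by simp, hf0⟩, ⟨n₀, by simp, hfn⟩, ?_, ?_⟩
  · have := X_of_seq n₀ (by omega) f (fun i hi => hadj i hi) hC4
    rw [hf0, hfn] at this
    exact this
  · rw [Set.ncard_image_of_injOn hinj, ← Finset.coe_Iic, Set.ncard_coe_finset,
      Nat.card_Iic]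
    omega
end

section
/- Let T be a finite indecomposable partially ordered set with |T| > 2, let b be an upper cover of a, suppose a has at least two upper covers, and suppose that any two upper covers of a have the same strict lower bounds. Then there exist w, ℓ ∈ T with w > a, ℓ < w, and ℓ incomparable to a and incomparable to b. -/
/-- If `T` is finite indecomposable with `|T| > 2`, `b` is an upper
cover of `a`, `a` has at least two upper covers, and any two upper covers of `a` have
the same strict lower bounds, then there exist `w > a` and `ℓ < w` with `ℓ` incomparable
to both `a` and `b`. -/
theorem exists_w_l {α : Type*} [PartialOrder α] [Fintype α]
    (hT : IsIndecomposablePoset α) (hcard : 2 < Fintype.card α)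
    {a b : α} (hcov : a ⋖ b)
    (htwo : ∃ x : α, a ⋖ x ∧ x ≠ b)
    (hsame : ∀ x y : α, a ⋖ x → a ⋖ y → ∀ t : α, t < x ↔ t < y) :
    ∃ w l : α, a < w ∧ l < w ∧ (¬ l ≤ a ∧ ¬ a ≤ l) ∧ (¬ l ≤ b ∧ ¬ b ≤ l) := by
  by_contra hcon
  push_neg at hcon
  obtain ⟨c, hac, hcb⟩ := htwo
  set A : Set α := {x : α | a < x} with hA
  have haut : IsOrderAutonomousIn (Set.univ : Set α) A := by
    refine ⟨Set.subset_univ _, ?_⟩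
    rintro t ⟨-, htA⟩ a₁ ha₁ a₂ ha₂
    have hna : ¬ a < t := htA
    constructor
    · constructor
      · intro hta₁
        -- apply failure with w = a₁, ℓ = t
        rcases eq_or_ne t a with rfl | htne
        · exact ha₂
        have key : t ≤ a ∨ a ≤ t ∨ t ≤ b ∨ b ≤ t := by
          by_contra hk
          push_neg at hk
          exact hk.2.2.2 (hcon a₁ t ha₁ hta₁ ⟨hk.1, hk.2.1⟩ hk.2.2.1)
        rcases key with h1 | h2 | h3 | h4
        · exact lt_of_le_of_lt (h1.lt_of_ne htne).le ha₂
        · exact absurd (h2.lt_of_ne (fun h => htne h.symm)) hna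
        · have htb : t < b := h3.lt_of_ne (by rintro rfl; exact hna hcov.lt)
          obtain ⟨x, hax, hxa₂⟩ := exists_covBy_le_of_lt (ha₂ : a < a₂)
          have := (hsame b x hcov hax t).mp htb
          exact lt_of_lt_of_le this hxa₂
        · exact absurd (lt_of_lt_of_le hcov.lt h4) hna
      · intro hta₂
        rcases eq_or_ne t a with rfl | htne
        · exact ha₁
        have key : t ≤ a ∨ a ≤ t ∨ t ≤ b ∨ b ≤ t := by
          by_contra hk
          push_neg at hk
          exact hk.2.2.2 (hcon a₂ t ha₂ hta₂ ⟨hk.1, hk.2.1⟩ hk.2.2.1)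
        rcases key with h1 | h2 | h3 | h4
        · exact lt_of_le_of_lt (h1.lt_of_ne htne).le ha₁
        · exact absurd (h2.lt_of_ne (fun h => htne h.symm)) hna
        · have htb : t < b := h3.lt_of_ne (by rintro rfl; exact hna hcov.lt)
          obtain ⟨x, hax, hxa₁⟩ := exists_covBy_le_of_lt (ha₁ : a < a₁)
          have := (hsame b x hcov hax t).mp htb
          exact lt_of_lt_of_le this hxa₁
        · exact absurd (lt_of_lt_of_le hcov.lt h4) hna
    · constructor
      · intro h; exact absurd (ha₁.trans h) hna
      · intro h; exact absurd (ha₂.trans h) hna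
  rcases hT A haut with hsub | heq
  · exact hcb (hsub hcov.lt hac.lt ▸ rfl)
  · have : a ∈ A := heq ▸ Set.mem_univ a
    exact lt_irrefl a this
end

section
/- Every indecomposable V-cover is, as a finite partially ordered set, indecomposable. -/
/-- Every indecomposable V-cover is indecomposable. -/
theorem vCover_indecomposable {β : Type*} [PartialOrder β] [Fintype β]
    {l d a b h : β} {F : Set β} (hC : IsIndecVCover l d a b h F) :
    IsIndecomposablePoset β := by
  classical
  obtain ⟨hne, hlmin, hdmin, hmin2, hUl, haF, hInc, hFence, hHmax, hUd⟩ := hC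
  obtain ⟨n, f, hinj, hrange, hf0, hflast, hnon, halt⟩ := hFence
  -- basic translations
  have hdlt : ∀ z, d < z ↔ z = h := fun z => by
    rw [← Set.mem_singleton_iff, ← hUd]; rfl
  have hllt : ∀ z, l < z ↔ z = a ∨ z ∈ F := fun z => by
    rw [← Set.mem_insert_iff, ← hUl]; rfl
  have hFmem : ∀ i, f i ∈ F := fun i => hrange ▸ ⟨i, rfl⟩
  have hhF : h ∈ F := hflast ▸ hFmem (Fin.last n)
  have hlh : l < h := (hllt h).2 (Or.inr hhF)
  have hdh : d < h := (hdlt h).2 rfl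
  have hld : ¬ l ≤ d := fun hle => hne (le_antisymm hle (hdmin hle))
  have hdl : ¬ d ≤ l := fun hle => hne (le_antisymm (hlmin hle) hle)
  have hla : l < a := (hllt a).2 (Or.inl rfl)
  have hlF : ∀ z ∈ F, l < z := fun z hz => (hllt z).2 (Or.inr hz)
  have hah : a ≠ h := fun e => haF (e ▸ hhF)
  have hamax : ∀ z, ¬ a < z := by
    intro z hz
    rcases (hllt z).1 (lt_trans hla hz) with rfl | hzF
    · exact lt_irrefl _ hz
    · exact (hInc z hzF).1 hz.le
  have hhmax : ∀ z, ¬ h < z := by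
    intro z hz
    rcases (hllt z).1 (lt_trans hlh hz) with rfl | hzF
    · exact (hInc h hhF).2 hz.le
    · exact hHmax z hzF hz
  have huniv : ∀ z : β, z = l ∨ z = d ∨ z = a ∨ z ∈ F := by
    intro z
    obtain ⟨m, hm, hmmin⟩ : ∃ m ∈ {w : β | w ≤ z}, ∀ w ∈ {w : β | w ≤ z}, ¬ w < m :=
      wellFounded_lt.has_min _ ⟨z, le_refl z⟩
    have hmin : IsMin m := by
      intro w hw
      by_contra hwm
      exact hmmin w (le_trans hw hm) (lt_of_le_of_ne hw (fun e => hwm (e ▸ le_refl _)))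
    rcases hmin2 m hmin with rfl | rfl
    · rcases eq_or_lt_of_le hm with e | hlt
      · exact Or.inl e.symm
      · rcases (hllt z).1 hlt with rfl | hzF
        · exact Or.inr (Or.inr (Or.inl rfl))
        · exact Or.inr (Or.inr (Or.inr hzF))
    · rcases eq_or_lt_of_le hm with e | hlt
      · exact Or.inr (Or.inl e.symm)
      · exact Or.inr (Or.inr (Or.inr ((hdlt z).1 hlt ▸ hhF)))
  have hconsec : ∀ i : Fin n, f i.castSucc < f i.succ ∨ f i.succ < f i.castSucc := by
    intro i
    rcases halt with h1 | h1 <;>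
    · have := h1 i
      split_ifs at this
      · first | exact Or.inl this | exact Or.inr this
      · first | exact Or.inl this | exact Or.inr this
  -- main argument
  intro A hA
  by_contra hcon
  push_neg at hcon
  obtain ⟨hns, hneqA⟩ := hcon
  obtain ⟨x, hx, y, hy, hxy⟩ := hns
  have haut : ∀ t ∉ A, ∀ a₁ ∈ A, ∀ a₂ ∈ A, (t < a₁ ↔ t < a₂) ∧ (a₁ < t ↔ a₂ < t) :=
    fun t ht => hA.2 t ⟨Set.mem_univ t, ht⟩
  have hpick : ∀ w : β, ∃ z ∈ A, z ≠ w := by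
    intro w
    by_cases hxw : x = w
    · exact ⟨y, hy, fun e => hxy (hxw ▸ e ▸ rfl)⟩
    · exact ⟨x, hx, hxw⟩
  by_cases hlA : l ∈ A
  · by_cases hdA : d ∈ A
    · -- l, d ∈ A : everything is in A, contradicting A ≠ univ
      have haA : a ∈ A := by
        by_contra haA
        have := ((haut a haA l hlA d hdA).2).mp hla
        exact hah ((hdlt a).1 this)
      have hFA : ∀ z ∈ F, z ∈ A := by
        intro z hz
        by_cases hzh : z = h
        · subst hzh
          by_contra hhA
          exact hamax z (((haut z hhA l hlA a haA).2).mp hlh)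
        · by_contra hzA
          exact hzh ((hdlt z).1 (((haut z hzA l hlA d hdA).2).mp (hlF z hz)))
      apply hneqA
      ext z
      simp only [Set.mem_univ, iff_true]
      rcases huniv z with rfl | rfl | rfl | hz
      exacts [hlA, hdA, haA, hFA z hz]
    · -- l ∈ A, d ∉ A
      have hhA : h ∉ A := by
        intro hh
        exact hdl (((haut d hdA h hh l hlA).1).mp hdh).le
      by_cases haA : a ∈ A
      · exact hamax h (((haut h hhA l hlA a haA).2).mp hlh)
      · obtain ⟨z, hzA, hzl⟩ := hpick l
        have hzF : z ∈ F := by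
          rcases huniv z with rfl | rfl | rfl | hz
          · exact absurd rfl hzl
          · exact absurd hzA hdA
          · exact absurd hzA haA
          · exact hz
        exact (hInc z hzF).2 (((haut a haA l hlA z hzA).2).mp hla).le
  · -- l ∉ A
    have hdA : d ∉ A := by
      intro hdA
      obtain ⟨z, hzA, hzd⟩ := hpick d
      have hlz : l < z := by
        rcases huniv z with rfl | rfl | rfl | hz
        · exact absurd hzA hlA
        · exact absurd rfl hzd
        · exact hla
        · exact hlF z hz
      exact hld (((haut l hlA z hzA d hdA).1).mp hlz).le
    have hhA : h ∉ A := by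
      intro hh
      obtain ⟨z, hzA, hzh⟩ := hpick h
      exact hzh ((hdlt z).1 (((haut d hdA h hh z hzA).1).mp hdh))
    have hmemF : ∀ z ∈ A, z ≠ a → z ∈ F := by
      intro z hz hza
      rcases huniv z with rfl | rfl | rfl | hzF
      · exact absurd hz hlA
      · exact absurd hz hdA
      · exact absurd rfl hza
      · exact hzF
    by_cases haA : a ∈ A
    · -- a ∈ A together with some fence element; walk up the fence to h
      have key : ∀ m : ℕ, ∀ j : Fin (n + 1), n ≤ j.val + m → f j ∈ A → False := by
        intro m
        induction m with
        | zero =>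
          intro j hj hfj
          have : j = Fin.last n := Fin.ext (le_antisymm (Nat.lt_succ_iff.mp j.isLt) hj)
          exact hhA (by rwa [this, hflast] at hfj)
        | succ m ih =>
          intro j hj hfj
          by_cases hjn : j.val < n
          · set i0 : Fin n := ⟨j.val, hjn⟩ with hi0
            have hcs : i0.castSucc = j := Fin.ext rfl
            by_cases hsA : f i0.succ ∈ A
            · exact ih i0.succ (by simpa [Fin.val_succ] using (by omega : n ≤ j.val + 1 + m)) hsA
            · have hsF : f i0.succ ∈ F := hFmem _
              rcases hconsec i0 with hc | hc
              · rw [hcs] at hc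
                exact (hInc (f i0.succ) hsF).1
                  (((haut (f i0.succ) hsA (f j) hfj a haA).2).mp hc).le
              · rw [hcs] at hc
                exact (hInc (f i0.succ) hsF).2
                  (((haut (f i0.succ) hsA (f j) hfj a haA).1).mp hc).le
          · have : j = Fin.last n := Fin.ext (le_antisymm (Nat.lt_succ_iff.mp j.isLt) (by omega))
            exact hhA (by rwa [this, hflast] at hfj)
      obtain ⟨z, hzA, hza⟩ := hpick a
      obtain ⟨i, rfl⟩ : ∃ i, f i = z := by
        have := hmemF z hzA hza
        rw [← hrange] at this
        exact this
      exact key n i (by omega) hzA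
    · -- A ⊆ F \ {h}
      have hxF : x ∈ F := hmemF x hx (fun e => haA (e ▸ hx))
      have hyF : y ∈ F := hmemF y hy (fun e => haA (e ▸ hy))
      set T : Finset (Fin (n + 1)) := Finset.univ.filter (fun i => f i ∈ A) with hT
      obtain ⟨ix, hix⟩ : ∃ i, f i = x := by rw [← hrange] at hxF; exact hxF
      obtain ⟨iy, hiy⟩ : ∃ i, f i = y := by rw [← hrange] at hyF; exact hyF
      have hixT : ix ∈ T := Finset.mem_filter.2 ⟨Finset.mem_univ _, hix ▸ hx⟩
      have hiyT : iy ∈ T := Finset.mem_filter.2 ⟨Finset.mem_univ _, hiy ▸ hy⟩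
      have hTne : T.Nonempty := ⟨ix, hixT⟩
      set jm : Fin (n + 1) := T.max' hTne with hjm
      have hjmA : f jm ∈ A := (Finset.mem_filter.1 (T.max'_mem hTne)).2
      have hjmn : (jm : ℕ) < n := by
        rcases Nat.lt_succ_iff_lt_or_eq.mp jm.isLt with hlt | heq
        · exact hlt
        · exfalso
          apply hhA
          have : jm = Fin.last n := Fin.ext heq
          rwa [this, hflast] at hjmA
      -- an element of A with index strictly below jm
      have hexk : ∃ k : Fin (n + 1), f k ∈ A ∧ (k : ℕ) < (jm : ℕ) := by
        have hixle : ix ≤ jm := T.le_max' ix hixT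
        have hiyle : iy ≤ jm := T.le_max' iy hiyT
        have hixy : ix ≠ iy := fun e => hxy (hix ▸ hiy ▸ e ▸ rfl)
        by_cases hixjm : ix = jm
        · refine ⟨iy, hiy ▸ hy, ?_⟩
          have : iy < jm := lt_of_le_of_ne hiyle (fun e => hixy (hixjm.trans e.symm))
          exact this
        · have : ix < jm := lt_of_le_of_ne hixle hixjm
          exact ⟨ix, hix ▸ hx, this⟩
      obtain ⟨k, hkA, hkjm⟩ := hexk
      set i0 : Fin n := ⟨jm.val, hjmn⟩ with hi0
      have hcs : i0.castSucc = jm := Fin.ext rfl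
      have htA : f i0.succ ∉ A := by
        intro hc
        have : i0.succ ∈ T := Finset.mem_filter.2 ⟨Finset.mem_univ _, hc⟩
        have := T.le_max' _ this
        rw [← hjm] at this
        have : (i0.succ : ℕ) ≤ (jm : ℕ) := this
        simp [Fin.val_succ] at this
        exact lt_irrefl _ this
      have hknon := hnon k i0.succ (by show k.val + 1 < jm.val + 1; omega)
      rcases hconsec i0 with hc | hc <;> rw [hcs] at hc
      · exact hknon.1 (((haut (f i0.succ) htA (f jm) hjmA (f k) hkA).2).mp hc).le
      · exact hknon.2 (((haut (f i0.succ) htA (f jm) hjmA (f k) hkA).1).mp hc).le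
end

section
/- Let C be an indecomposable V-cover with distinguished elements a and b. If I ⊆ C is indecomposable (with the induced order) and {a, b} ⊊ I, then I = C. -/
/-- If `C` is an indecomposable V-cover with distinguished elements
`a`, `b`, and `I ⊆ C` is indecomposable with `{a, b} ⊊ I`, then `I = C`. -/
theorem vCover_minimal {β : Type*} [PartialOrder β] [Fintype β]
    {l d a b h : β} {F : Set β} (hC : IsIndecVCover l d a b h F)
    {I : Set β} (hI : IsIndecomposableSubset I) (hsub : ({a, b} : Set β) ⊂ I) :
    I = Set.univ := by
  classical
  obtain ⟨hld, hlmin, hdmin, hminlr, hlub, haF, hainc, hfence, hhmax, hdub⟩ := hC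
  obtain ⟨n, f, finj, frange, hf0, hflast, hfar, _⟩ := hfence
  have haI : a ∈ I := hsub.1 (by simp)
  have hbI : b ∈ I := hsub.1 (by simp)
  -- third element of I
  obtain ⟨c, hcI, hcab⟩ : ∃ c ∈ I, c ∉ ({a, b} : Set β) := by
    by_contra hcon
    push_neg at hcon
    exact hsub.2 hcon
  have hcA : c ≠ a ∧ c ≠ b := by
    constructor <;> (intro hh; apply hcab; simp [hh])
  -- basic membership facts
  have hbF : b ∈ F := by rw [← frange]; exact ⟨0, hf0⟩
  have hhF : h ∈ F := by rw [← frange]; exact ⟨Fin.last n, hflast⟩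
  have hla : l < a := by
    have : a ∈ insert a F := Set.mem_insert _ _
    rwa [← hlub] at this
  have hlF : ∀ g ∈ F, l < g := by
    intro g hg
    have : g ∈ insert a F := Set.mem_insert_of_mem _ hg
    rwa [← hlub] at this
  have hdh : d < h := by
    have : h ∈ ({h} : Set β) := rfl
    rwa [← hdub] at this
  have hdlt : ∀ x, d < x → x = h := by
    intro x hx
    have : x ∈ {x : β | d < x} := hx
    rwa [hdub] at this
  have hab : a ≠ b := fun e => haF (e ▸ hbF)
  have hah : a ≠ h := fun e => haF (e ▸ hhF)
  have hlnF : l ∉ F := fun hl => lt_irrefl l (hlF l hl)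
  have hla' : l ≠ a := ne_of_lt hla
  -- every element has a minimal element below it
  have hmin_le : ∀ x : β, ∃ m, m ≤ x ∧ IsMin m := by
    intro x
    obtain ⟨m, hmx, hm⟩ := exists_minimal_le_of_wellFoundedLT (fun _ : β => True) x trivial
    refine ⟨m, hmx, ?_⟩
    intro y hy
    exact hm.2 trivial hy
  -- the universe is {l, d, a} ∪ F
  have huniv : ∀ x : β, x = l ∨ x = d ∨ x = a ∨ x ∈ F := by
    intro x
    obtain ⟨m, hmx, hm⟩ := hmin_le x
    rcases hminlr m hm with rfl | rfl
    · rcases eq_or_lt_of_le hmx with rfl | hlt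
      · exact Or.inl rfl
      · have hx : x ∈ insert a F := by rw [← hlub]; exact hlt
        rcases hx with heq | hx
        · exact Or.inr (Or.inr (Or.inl heq))
        · exact Or.inr (Or.inr (Or.inr hx))
    · rcases eq_or_lt_of_le hmx with rfl | hlt
      · exact Or.inr (Or.inl rfl)
      · have := hdlt x hlt
        exact Or.inr (Or.inr (Or.inr (this ▸ hhF)))
  -- comparabilities of a
  have ha_above : ∀ x, ¬ a < x := by
    intro x hx
    have : x ∈ insert a F := by rw [← hlub]; exact hla.trans hx
    rcases this with rfl | hxF
    · exact lt_irrefl _ hx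
    · exact (hainc x hxF).1 hx.le
  have ha_below : ∀ x, x < a → x = l := by
    intro x hx
    rcases huniv x with rfl | rfl | rfl | hxF
    · rfl
    · exact absurd (hah (hdlt a hx)) (fun _ => hah (hdlt a hx))
    · exact absurd hx (lt_irrefl _)
    · exact absurd hx.le (hainc x hxF).2
  -- Step A : l ∈ I
  have hlI : l ∈ I := by
    by_contra hlI
    have haut : IsOrderAutonomousIn I (I \ {a}) := by
      refine ⟨Set.diff_subset, ?_⟩
      intro t ht a₁ ha₁ a₂ ha₂
      have hta : t = a := by
        rcases ht with ⟨htI, htA⟩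
        by_contra hne
        exact htA ⟨htI, hne⟩
      subst hta
      constructor
      · simp [ha_above]
      · constructor
        · intro h1
          exact absurd (ha_below _ h1 ▸ ha₁.1) hlI
        · intro h2
          exact absurd (ha_below _ h2 ▸ ha₂.1) hlI
    rcases hI _ haut with hs | he
    · exact hcA.2 (hs ⟨hcI, fun e => hcA.1 (Set.eq_of_mem_singleton e)⟩
        ⟨hbI, fun e => hab (Set.eq_of_mem_singleton e).symm⟩)
    · have : a ∈ I \ {a} := he.symm ▸ haI
      exact this.2 rfl
  -- Step B : F ⊆ I
  have hFI : F ⊆ I := by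
    intro g hgF
    by_contra hgI
    obtain ⟨j, rfl⟩ : ∃ j, f j = g := by rwa [← frange] at hgF
    -- least index not in I
    set S : Finset (Fin (n + 1)) := Finset.univ.filter (fun i => f i ∉ I) with hS
    have hSne : S.Nonempty := ⟨j, by simp [hS, hgI]⟩
    set k := S.min' hSne with hk
    have hkS : k ∈ S := S.min'_mem hSne
    have hfkI : f k ∉ I := by simpa [hS] using hkS
    have hlt_mem : ∀ i : Fin (n + 1), i < k → f i ∈ I := by
      intro i hik
      by_contra hin
      exact absurd (S.min'_le i (by simp [hS, hin])) (not_le_of_gt hik)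
    have h0k : (0 : Fin (n + 1)) < k := by
      rcases lt_or_eq_of_le (Fin.zero_le k) with hlt | heq
      · exact hlt
      · exact absurd (heq ▸ hf0 ▸ hbI : f k ∈ I) hfkI
    set A : Set β := insert a (f '' {i | i < k}) with hA
    have hAsub : A ⊆ I := by
      intro x hx
      rcases hx with rfl | ⟨i, hik, rfl⟩
      · exact haI
      · exact hlt_mem i hik
    have hhA : h ∉ A := by
      intro hha
      rcases hha with heq | ⟨i, hik, hfi⟩
      · exact hah heq.symm
      · have : i = Fin.last n := finj (hfi.trans hflast.symm)
        subst this
        exact absurd (lt_of_lt_of_le hik (Fin.le_last k)) (lt_irrefl _)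
    have hlA : l ∉ A := by
      intro hla2
      rcases hla2 with heq | ⟨i, _, hfi⟩
      · exact hla' heq
      · exact hlnF (hfi ▸ (frange ▸ ⟨i, rfl⟩ : f i ∈ F))
    -- elements of A are a or fence elements below k
    have hAltl : ∀ x ∈ A, l < x := by
      intro x hxA
      rcases hxA with heq | ⟨i, _, heq⟩
      · exact heq ▸ hla
      · exact heq ▸ hlF _ (frange ▸ ⟨i, rfl⟩)
    have hA_incomp : ∀ t ∈ I \ A, t ≠ l → ∀ x ∈ A, ¬ t < x ∧ ¬ x < t := by
      intro t ht htl x hxA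
      have htI := ht.1
      have htA := ht.2
      rcases huniv t with heq | heq | heq | htF
      · exact absurd heq htl
      · rw [heq]
        constructor
        · intro hdx
          exact hhA (hdlt _ hdx ▸ hxA)
        · intro hxd
          exact (hdmin hxd.le : d ≤ x).not_gt hxd
      · exfalso
        apply htA
        rw [heq]
        exact Set.mem_insert a _
      · obtain ⟨jt, rfl⟩ : ∃ jt, f jt = t := by rwa [← frange] at htF
        have hkjt : k < jt := by
          rcases lt_trichotomy jt k with hh | heq2 | hh
          · exact absurd (Or.inr ⟨jt, hh, rfl⟩ : f jt ∈ A) htA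
          · exact absurd (heq2 ▸ htI) hfkI
          · exact hh
        rcases hxA with heq | ⟨i, hik, heq⟩
        · rw [heq]
          exact ⟨fun hh => (hainc _ (frange ▸ ⟨jt, rfl⟩)).2 hh.le,
            fun hh => ha_above _ hh⟩
        · have hfar' := hfar i jt
            (by
              have h1 : i.val < k.val := hik
              have h2 : k.val < jt.val := hkjt
              omega)
          rw [← heq]
          exact ⟨fun hh => hfar'.2 hh.le, fun hh => hfar'.1 hh.le⟩
    have haut : IsOrderAutonomousIn I A := by
      refine ⟨hAsub, ?_⟩
      intro t ht a₁ ha₁ a₂ ha₂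
      by_cases htl : t = l
      · constructor
        · exact iff_of_true (htl ▸ hAltl _ ha₁) (htl ▸ hAltl _ ha₂)
        · constructor
          · intro hh; exact absurd ((htl ▸ hlmin : IsMin t) hh.le) (not_le_of_gt hh)
          · intro hh; exact absurd ((htl ▸ hlmin : IsMin t) hh.le) (not_le_of_gt hh)
      · have h1 := hA_incomp t ht htl a₁ ha₁
        have h2 := hA_incomp t ht htl a₂ ha₂
        exact ⟨iff_of_false h1.1 h2.1, iff_of_false h1.2 h2.2⟩
    rcases hI _ haut with hs | he
    · have hbA : b ∈ A := Or.inr ⟨0, h0k, hf0⟩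
      have haA : a ∈ A := Set.mem_insert _ _
      exact hab (hs haA hbA)
    · exact hlA (he.symm ▸ hlI)
  -- Step C : d ∈ I
  have hdI : d ∈ I := by
    by_contra hdI
    have key : ∀ x ∈ I \ ({l} : Set β), l < x := by
      intro x hx
      rcases huniv x with heq | heq | heq | hxF
      · exact absurd (Set.mem_singleton_iff.mpr heq) hx.2
      · exact absurd (heq ▸ hx.1) hdI
      · exact heq ▸ hla
      · exact hlF _ hxF
    have haut : IsOrderAutonomousIn I (I \ {l}) := by
      refine ⟨Set.diff_subset, ?_⟩
      intro t ht a₁ ha₁ a₂ ha₂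
      have htl : t = l := by
        rcases ht with ⟨htI, htA⟩
        by_contra hne
        exact htA ⟨htI, Set.mem_singleton_iff.not.mpr hne⟩
      constructor
      · exact iff_of_true (htl ▸ key _ ha₁) (htl ▸ key _ ha₂)
      · constructor
        · intro hh; exact absurd ((htl ▸ hlmin : IsMin t) hh.le) (not_le_of_gt hh)
        · intro hh; exact absurd ((htl ▸ hlmin : IsMin t) hh.le) (not_le_of_gt hh)
    rcases hI _ haut with hs | he
    · exact hab (hs ⟨haI, fun e => hla' (Set.eq_of_mem_singleton e).symm⟩
        ⟨hbI, fun e => hlnF ((Set.eq_of_mem_singleton e) ▸ hbF)⟩)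
    · have : l ∈ I \ ({l} : Set β) := he.symm ▸ hlI
      exact this.2 rfl
  -- conclude
  ext x
  simp only [Set.mem_univ, iff_true]
  rcases huniv x with rfl | rfl | rfl | hxF
  · exact hlI
  · exact hdI
  · exact haI
  · exact hFI hxF
end

section
/- Let (P, a, b) ∈ 𝒳. If I ⊆ P is indecomposable (with the induced order) and {a, b} ⊊ I, then I = P. -/
/-- Structure of posets in `𝒳`: they are enumerated `f 0, …, f n` with `a = f 0`,
`b = f n`, and `f i < f j` iff `i + 2 ≤ j`. -/
private lemma inX_structure {α : Type*} [PartialOrder α] {P : Set α} {a b : α}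
    (hP : InX P a b) :
    ∃ n : ℕ, ∃ f : Fin (n + 1) → α, Function.Injective f ∧
      Set.range f = P ∧ f 0 = a ∧ f (Fin.last n) = b ∧
      ∀ i j : Fin (n + 1), f i < f j ↔ i.val + 2 ≤ j.val := by
  induction hP with
  | @base u a b v hub hab hav hua huv hbv =>
    refine ⟨3, ![a, u, v, b], ?_, ?_, rfl, rfl, ?_⟩
    · have hau : a ≠ u := fun h => hua.2 h.le
      have huv' : u ≠ v := fun h => huv.1 h.le
      have hvb : v ≠ b := fun h => hbv.2 h.le
      have hab' : a ≠ b := hab.ne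
      have hav' : a ≠ v := hav.ne
      have hub' : u ≠ b := hub.ne
      intro i j hij
      fin_cases i <;> fin_cases j <;> simp_all <;> omega
    · ext x
      simp [Fin.exists_fin_succ, Set.mem_insert_iff]
      tauto
    · have nua : ¬ u < a := fun h => hua.1 h.le
      have nau : ¬ a < u := fun h => hua.2 h.le
      have nuv : ¬ u < v := fun h => huv.1 h.le
      have nvu : ¬ v < u := fun h => huv.2 h.le
      have nbv : ¬ b < v := fun h => hbv.1 h.le
      have nvb : ¬ v < b := fun h => hbv.2 h.le
      have nva : ¬ v < a := fun h => lt_irrefl a (hav.trans h)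
      have nba : ¬ b < a := fun h => lt_irrefl a (hab.trans h)
      have nbu : ¬ b < u := fun h => lt_irrefl u (hub.trans h)
      intro i j
      fin_cases i <;> fin_cases j <;>
        simp_all [lt_irrefl]
  | @addMin P a' b a h ha hlt hinc ih =>
    obtain ⟨n, f, hinj, hrange, hf0, hflast, hchar⟩ := ih
    refine ⟨n + 1, Fin.cons a f, ?_, ?_, Fin.cons_zero _ _, ?_, ?_⟩
    · exact Fin.cons_injective_iff.2 ⟨by rw [hrange]; exact ha, hinj⟩
    · rw [Fin.range_cons, hrange]
    · rw [← Fin.succ_last, Fin.cons_succ, hflast]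
    · intro i j
      induction i using Fin.cases with
      | zero =>
        induction j using Fin.cases with
        | zero => simp
        | succ j =>
          rw [Fin.cons_zero, Fin.cons_succ]
          constructor
          · intro hlt'
            by_contra hj
            simp only [Fin.val_zero, Fin.val_succ] at hj
            have : j = 0 := by apply Fin.ext; simp only [Fin.val_zero]; omega
            rw [this, hf0] at hlt'
            exact hinc.1 hlt'.le
          · intro hj
            have hj0 : j ≠ 0 := by
              intro h0; subst h0; simp at hj
            have : f j ∈ P \ {a'} := by
              refine ⟨hrange ▸ Set.mem_range_self j, ?_⟩
              simp only [Set.mem_singleton_iff]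
              rw [← hf0]
              exact fun h => hj0 (hinj h)
            exact hlt (f j) this
      | succ i =>
        induction j using Fin.cases with
        | zero =>
          rw [Fin.cons_zero, Fin.cons_succ]
          simp only [Fin.val_succ, Fin.val_zero]
          constructor
          · intro hlt'
            by_cases hi0 : i = 0
            · rw [hi0, hf0] at hlt'
              exact absurd hlt'.le hinc.2
            · have : f i ∈ P \ {a'} := by
                refine ⟨hrange ▸ Set.mem_range_self i, ?_⟩
                simp only [Set.mem_singleton_iff]
                rw [← hf0]
                exact fun h => hi0 (hinj h)
              exact absurd (hlt (f i) this) (asymm hlt')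
          · omega
        | succ j =>
          rw [Fin.cons_succ, Fin.cons_succ, hchar]
          simp only [Fin.val_succ]
          omega
  | @addMax P a b' b h hb hgt hinc ih =>
    obtain ⟨n, f, hinj, hrange, hf0, hflast, hchar⟩ := ih
    refine ⟨n + 1, Fin.snoc f b, ?_, ?_, ?_, Fin.snoc_last _ _, ?_⟩
    · intro i j hij
      induction i using Fin.lastCases with
      | last =>
        induction j using Fin.lastCases with
        | last => rfl
        | cast j =>
          rw [Fin.snoc_last, Fin.snoc_castSucc] at hij
          exact absurd (hrange ▸ Set.mem_range_self j) (hij ▸ hb)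
      | cast i =>
        induction j using Fin.lastCases with
        | last =>
          rw [Fin.snoc_last, Fin.snoc_castSucc] at hij
          exact absurd (hrange ▸ Set.mem_range_self i) (hij.symm ▸ hb)
        | cast j =>
          rw [Fin.snoc_castSucc, Fin.snoc_castSucc] at hij
          rw [hinj hij]
    · ext x
      constructor
      · rintro ⟨i, rfl⟩
        induction i using Fin.lastCases with
        | last => rw [Fin.snoc_last]; exact Set.mem_insert _ _
        | cast i =>
          rw [Fin.snoc_castSucc]
          exact Set.mem_insert_of_mem _ (hrange ▸ Set.mem_range_self i)
      · rintro (rfl | hx)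
        · exact ⟨Fin.last _, Fin.snoc_last _ _⟩
        · rw [← hrange] at hx
          obtain ⟨i, rfl⟩ := hx
          exact ⟨i.castSucc, Fin.snoc_castSucc _ _ _⟩
    · rw [show (0 : Fin (n + 2)) = Fin.castSucc 0 by rfl, Fin.snoc_castSucc, hf0]
    · intro i j
      induction i using Fin.lastCases with
      | last =>
        induction j using Fin.lastCases with
        | last => simp
        | cast j =>
          rw [Fin.snoc_last, Fin.snoc_castSucc]
          simp only [Fin.val_last, Fin.coe_castSucc]
          constructor
          · intro hlt'
            by_cases hjl : j = Fin.last n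
            · rw [hjl, hflast] at hlt'
              exact absurd hlt'.le hinc.1
            · have : f j ∈ P \ {b'} := by
                refine ⟨hrange ▸ Set.mem_range_self j, ?_⟩
                simp only [Set.mem_singleton_iff]
                rw [← hflast]
                exact fun h => hjl (hinj h)
              exact absurd (hgt (f j) this) (asymm hlt')
          · have := j.isLt
            omega
      | cast i =>
        induction j using Fin.lastCases with
        | last =>
          rw [Fin.snoc_last, Fin.snoc_castSucc]
          simp only [Fin.val_last, Fin.coe_castSucc]
          constructor
          · intro hlt'
            by_contra hj
            have : i = Fin.last n := by
              have := i.isLt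
              ext
              simp only [Fin.val_last]
              omega
            rw [this, hflast] at hlt'
            exact hinc.2 hlt'.le
          · intro hj
            have hil : i ≠ Fin.last n := by
              intro h0; subst h0; simp only [Fin.val_last] at hj; omega
            have : f i ∈ P \ {b'} := by
              refine ⟨hrange ▸ Set.mem_range_self i, ?_⟩
              simp only [Set.mem_singleton_iff]
              rw [← hflast]
              exact fun h => hil (hinj h)
            exact hgt (f i) this
        | cast j =>
          rw [Fin.snoc_castSucc, Fin.snoc_castSucc, hchar]
          simp

/-- If `(P, a, b) ∈ 𝒳` and `I ⊆ P` is indecomposable with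
`{a, b} ⊊ I`, then `I = P`. -/
theorem inX_minimal {α : Type*} [PartialOrder α] {P : Set α} {a b : α}
    (hP : InX P a b) {I : Set α} (hIP : I ⊆ P) (hI : IsIndecomposableSubset I)
    (hsub : ({a, b} : Set α) ⊂ I) :
    I = P := by
  obtain ⟨n, f, hinj, hrange, hf0, hflast, hchar⟩ := inX_structure hP
  have haI : a ∈ I := hsub.1 (Set.mem_insert _ _)
  have hbI : b ∈ I := hsub.1 (Set.mem_insert_of_mem _ rfl)
  obtain ⟨c, hcI, hcab⟩ := Set.not_subset.1 hsub.2
  -- main claim: every f k is in I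
  have key : ∀ k : Fin (n + 1), f k ∈ I := by
    intro k
    by_contra hk
    have hk0 : k ≠ 0 := fun h => hk (h ▸ hf0 ▸ haI)
    have hkl : k ≠ Fin.last n := fun h => hk (h ▸ hflast ▸ hbI)
    set L : Set α := I ∩ (f '' {i | i.val < k.val}) with hL
    set U : Set α := I ∩ (f '' {i | k.val < i.val}) with hU
    -- every element of I is in L or U
    have hsplit : ∀ x ∈ I, x ∈ L ∨ x ∈ U := by
      intro x hx
      obtain ⟨j, rfl⟩ := hrange ▸ hIP hx
      have hjk : j ≠ k := fun h => hk (h ▸ hx)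
      rcases lt_or_gt_of_ne (fun h : j.val = k.val => hjk (Fin.ext h)) with h | h
      · exact Or.inl ⟨hx, j, h, rfl⟩
      · exact Or.inr ⟨hx, j, h, rfl⟩
    have hLaut : IsOrderAutonomousIn I L := by
      refine ⟨Set.inter_subset_left, ?_⟩
      rintro t ⟨htI, htL⟩ a₁ ⟨ha₁I, i₁, hi₁, rfl⟩ a₂ ⟨ha₂I, i₂, hi₂, rfl⟩
      simp only [Set.mem_setOf_eq] at hi₁ hi₂
      obtain ⟨j, rfl⟩ := hrange ▸ hIP htI
      have hjk : k.val < j.val := by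
        rcases hsplit _ htI with h | h
        · exact absurd h htL
        · obtain ⟨_, j', hj', hjj'⟩ := h
          rwa [hinj hjj'] at hj'
      rw [hchar, hchar, hchar, hchar]
      constructor
      · constructor <;> (intro h; omega)
      · constructor <;> (intro _; omega)
    have hUaut : IsOrderAutonomousIn I U := by
      refine ⟨Set.inter_subset_left, ?_⟩
      rintro t ⟨htI, htU⟩ a₁ ⟨ha₁I, i₁, hi₁, rfl⟩ a₂ ⟨ha₂I, i₂, hi₂, rfl⟩
      simp only [Set.mem_setOf_eq] at hi₁ hi₂
      obtain ⟨j, rfl⟩ := hrange ▸ hIP htI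
      have hjk : j.val < k.val := by
        rcases hsplit _ htI with h | h
        · obtain ⟨_, j', hj', hjj'⟩ := h
          rwa [hinj hjj'] at hj'
        · exact absurd h htU
      rw [hchar, hchar, hchar, hchar]
      constructor
      · constructor <;> (intro _; omega)
      · constructor <;> (intro h; omega)
    have haL : a ∈ L := by
      refine ⟨haI, 0, ?_, hf0⟩
      simp only [Set.mem_setOf_eq, Fin.val_zero]
      exact Nat.pos_of_ne_zero (fun h => hk0 (Fin.ext h))
    have hbU : b ∈ U := by
      refine ⟨hbI, Fin.last n, ?_, hflast⟩
      simp only [Set.mem_setOf_eq, Fin.val_last]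
      have := k.isLt
      have : k.val ≠ n := fun h => hkl (Fin.ext (h.trans (Fin.val_last n).symm))
      omega
    have hLss : L.Subsingleton := by
      rcases hI L hLaut with h | h
      · exact h
      · exfalso
        obtain ⟨_, j, hj, hjb⟩ : b ∈ L := h ▸ hbI
        rw [← hflast] at hjb
        have := hinj hjb
        subst this
        simp only [Set.mem_setOf_eq, Fin.val_last] at hj
        have := k.isLt
        omega
    have hUss : U.Subsingleton := by
      rcases hI U hUaut with h | h
      · exact h
      · exfalso
        obtain ⟨_, j, hj, hja⟩ : a ∈ U := h ▸ haI
        rw [← hf0] at hja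
        have := hinj hja
        subst this
        simp at hj
    rcases hsplit c hcI with h | h
    · exact hcab (Or.inl (hLss h haL))
    · exact hcab (Or.inr (hUss h hbU))
  apply Set.Subset.antisymm hIP
  intro p hp
  obtain ⟨i, rfl⟩ := hrange ▸ hp
  exact key i
end

section
/- Let T be a finite indecomposable partially ordered set with |T| > 2, let a < b in T, let R = {t ∈ T : a < t < b}, and suppose the induced subposet T \ R decomposes as L ⊕ U with L, U nonempty (every element of L strictly below every element of U). Then a ∈ L and a is maximal in L, b ∈ U and b is minimal in U, R ≠ ∅, and both of the following sets are nonempty: {r ∈ R : r is not above every element of L} and {r ∈ R : r is not below every element of U}. -/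
private lemma aux_below {α : Type*} [PartialOrder α] (hT : IsIndecomposablePoset α)
    {L A : Set α} (hcompl : ∀ x, x ∉ A → x ∈ L)
    (hbelow : ∀ t ∈ L, ∀ x ∈ A, t < x) :
    A.Subsingleton ∨ A = Set.univ := by
  apply hT
  refine ⟨Set.subset_univ _, ?_⟩
  intro t ht a₁ h₁ a₂ h₂
  have htL := hcompl t ht.2
  have h1 := hbelow t htL a₁ h₁
  have h2 := hbelow t htL a₂ h₂
  exact ⟨⟨fun _ => h2, fun _ => h1⟩,
    fun h => absurd h (asymm h1), fun h => absurd h (asymm h2)⟩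

private lemma aux_above {α : Type*} [PartialOrder α] (hT : IsIndecomposablePoset α)
    {Uu A : Set α} (hcompl : ∀ x, x ∉ A → x ∈ Uu)
    (habove : ∀ t ∈ Uu, ∀ x ∈ A, x < t) :
    A.Subsingleton ∨ A = Set.univ := by
  apply hT
  refine ⟨Set.subset_univ _, ?_⟩
  intro t ht a₁ h₁ a₂ h₂
  have htU := hcompl t ht.2
  have h1 := habove t htU a₁ h₁
  have h2 := habove t htU a₂ h₂
  exact ⟨⟨fun h => absurd h (asymm h1), fun h => absurd h (asymm h2)⟩,
    fun _ => h2, fun _ => h1⟩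

/-- If `T` is finite indecomposable, `|T| > 2`, `a < b`,
`R = {t : a < t < b}`, and `T \ R = L ⊕ U`, then `a` is maximal in `L`, `b` is minimal
in `U`, `R ≠ ∅`, and both the set of `r ∈ R` not above all of `L` and the set of
`r ∈ R` not below all of `U` are nonempty. -/
theorem series_decomposition_facts {α : Type*} [PartialOrder α] [Fintype α]
    (hT : IsIndecomposablePoset α) (hcard : 2 < Fintype.card α)
    {a b : α} (hab : a < b)
    {L U : Set α} (hL : L.Nonempty) (hU : U.Nonempty)
    (hLU : L ∪ U = Set.univ \ {t : α | a < t ∧ t < b})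
    (hdisj : Disjoint L U) (hlt : ∀ l ∈ L, ∀ u ∈ U, l < u) :
    a ∈ L ∧ (∀ x ∈ L, ¬ a < x) ∧ b ∈ U ∧ (∀ x ∈ U, ¬ x < b) ∧
    {t : α | a < t ∧ t < b}.Nonempty ∧
    {r : α | (a < r ∧ r < b) ∧ ¬ ∀ l ∈ L, l < r}.Nonempty ∧
    {r : α | (a < r ∧ r < b) ∧ ¬ ∀ u ∈ U, r < u}.Nonempty := by
  
  classical
  have hmem : ∀ x : α, x ∉ L → x ∉ U → (a < x ∧ x < b) := by
    intro x hxL hxU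
    by_contra hx
    have hx' : x ∈ L ∪ U := by rw [hLU]; exact ⟨Set.mem_univ x, hx⟩
    rcases hx' with h | h
    · exact hxL h
    · exact hxU h
  have hnR : ∀ x : α, x ∈ L ∨ x ∈ U → ¬(a < x ∧ x < b) := by
    intro x hx
    have hx' : x ∈ Set.univ \ {t : α | a < t ∧ t < b} := by
      rw [← hLU]
      rcases hx with h | h
      exacts [Or.inl h, Or.inr h]
    exact hx'.2
  have hLU' : ∀ x ∈ L, x ∉ U := fun x hx => Set.disjoint_left.mp hdisj hx
  -- a ∈ L
  have haL : a ∈ L := by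
    by_contra haL
    have haU : a ∈ U := by
      by_contra haU
      exact absurd (hmem a haL haU).1 (lt_irrefl a)
    have hbU : b ∈ U := by
      by_contra hbU
      by_cases hbL : b ∈ L
      · exact absurd (hlt b hbL a haU) (asymm hab)
      · exact absurd (hmem b hbL hbU).2 (lt_irrefl b)
    have hcompl : ∀ x, x ∉ U ∪ {t : α | a < t ∧ t < b} → x ∈ L := by
      intro x hx
      by_contra hxL
      exact hx (Or.inr (hmem x hxL (fun h => hx (Or.inl h))))
    have hbelow : ∀ t ∈ L, ∀ x ∈ U ∪ {t : α | a < t ∧ t < b}, t < x := by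
      intro t ht x hx
      rcases hx with h | h
      · exact hlt t ht x h
      · exact lt_trans (hlt t ht a haU) h.1
    rcases aux_below hT hcompl hbelow with hs | huniv
    · exact hab.ne (hs (Or.inl haU) (Or.inl hbU))
    · obtain ⟨l, hl⟩ := hL
      have hlA : l ∈ U ∪ {t : α | a < t ∧ t < b} := huniv.symm ▸ Set.mem_univ l
      rcases hlA with h | h
      · exact hLU' l hl h
      · exact hnR l (Or.inl hl) h
  -- b ∈ U
  have hbU : b ∈ U := by
    by_contra hbU
    have hbL : b ∈ L := by
      by_contra hbL
      exact absurd (hmem b hbL hbU).2 (lt_irrefl b)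
    have hcompl : ∀ x, x ∉ L ∪ {t : α | a < t ∧ t < b} → x ∈ U := by
      intro x hx
      by_contra hxU
      exact hx (Or.inr (hmem x (fun h => hx (Or.inl h)) hxU))
    have habove : ∀ t ∈ U, ∀ x ∈ L ∪ {t : α | a < t ∧ t < b}, x < t := by
      intro t ht x hx
      rcases hx with h | h
      · exact hlt x h t ht
      · exact lt_trans h.2 (hlt b hbL t ht)
    rcases aux_above hT hcompl habove with hs | huniv
    · exact hab.ne (hs (Or.inl haL) (Or.inl hbL))
    · obtain ⟨u, hu⟩ := hU
      have huA : u ∈ L ∪ {t : α | a < t ∧ t < b} := huniv.symm ▸ Set.mem_univ u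
      rcases huA with h | h
      · exact hLU' u h hu
      · exact hnR u (Or.inr hu) h
  have haMax : ∀ x ∈ L, ¬ a < x := fun x hx hax =>
    hnR x (Or.inl hx) ⟨hax, hlt x hx b hbU⟩
  have hbMin : ∀ x ∈ U, ¬ x < b := fun x hx hxb =>
    hnR x (Or.inr hx) ⟨hlt a haL x hx, hxb⟩
  -- R nonempty
  have hRne : {t : α | a < t ∧ t < b}.Nonempty := by
    by_contra hc
    have hRe : ∀ x : α, ¬(a < x ∧ x < b) := fun x hx => hc ⟨x, hx⟩
    have hLs : L.Subsingleton := by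
      rcases aux_above hT (Uu := U) (A := L)
        (fun x hx => by by_contra hxU; exact hRe x (hmem x hx hxU))
        (fun t ht x hx => hlt x hx t ht) with hs | huniv
      · exact hs
      · obtain ⟨u, hu⟩ := hU
        exact absurd (huniv.symm ▸ Set.mem_univ u) (fun h => hLU' u h hu)
    have hUs : U.Subsingleton := by
      rcases aux_below hT (L := L) (A := U)
        (fun x hx => by by_contra hxL; exact hRe x (hmem x hxL hx))
        (fun t ht x hx => hlt t ht x hx) with hs | huniv
      · exact hs
      · obtain ⟨l, hl⟩ := hL
        exact absurd (huniv.symm ▸ Set.mem_univ l) (hLU' l hl)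
    have hall : ∀ x : α, x = a ∨ x = b := by
      intro x
      by_cases hxL : x ∈ L
      · exact Or.inl (hLs hxL haL)
      · by_cases hxU : x ∈ U
        · exact Or.inr (hUs hxU hbU)
        · exact absurd (hmem x hxL hxU) (hRe x)
    have hinj : Function.Injective (fun x : α => decide (x = a)) := by
      intro x y h
      rcases hall x with rfl | rfl <;> rcases hall y with rfl | rfl <;>
        simp_all [hab.ne']
    have := Fintype.card_le_of_injective _ hinj
    simp only [Fintype.card_bool] at this
    omega
  -- not all of R above all of L
  have h6 : {r : α | (a < r ∧ r < b) ∧ ¬ ∀ l ∈ L, l < r}.Nonempty := by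
    by_contra hc
    have hall : ∀ r : α, (a < r ∧ r < b) → ∀ l ∈ L, l < r := by
      intro r hr l hl
      by_contra hlr
      exact hc ⟨r, hr, fun h => hlr (h l hl)⟩
    have hcompl : ∀ x, x ∉ U ∪ {t : α | a < t ∧ t < b} → x ∈ L := by
      intro x hx
      by_contra hxL
      exact hx (Or.inr (hmem x hxL (fun h => hx (Or.inl h))))
    have hbelow : ∀ t ∈ L, ∀ x ∈ U ∪ {t : α | a < t ∧ t < b}, t < x := by
      intro t ht x hx
      rcases hx with h | h
      · exact hlt t ht x h
      · exact hall x h t ht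
    rcases aux_below hT hcompl hbelow with hs | huniv
    · obtain ⟨r, hr⟩ := hRne
      exact hr.2.ne (hs (Or.inr hr) (Or.inl hbU))
    · obtain ⟨l, hl⟩ := hL
      have hlA : l ∈ U ∪ {t : α | a < t ∧ t < b} := huniv.symm ▸ Set.mem_univ l
      rcases hlA with h | h
      · exact hLU' l hl h
      · exact hnR l (Or.inl hl) h
  have h7 : {r : α | (a < r ∧ r < b) ∧ ¬ ∀ u ∈ U, r < u}.Nonempty := by
    by_contra hc
    have hall : ∀ r : α, (a < r ∧ r < b) → ∀ u ∈ U, r < u := by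
      intro r hr u hu
      by_contra hru
      exact hc ⟨r, hr, fun h => hru (h u hu)⟩
    have hcompl : ∀ x, x ∉ L ∪ {t : α | a < t ∧ t < b} → x ∈ U := by
      intro x hx
      by_contra hxU
      exact hx (Or.inr (hmem x (fun h => hx (Or.inl h)) hxU))
    have habove : ∀ t ∈ U, ∀ x ∈ L ∪ {t : α | a < t ∧ t < b}, x < t := by
      intro t ht x hx
      rcases hx with h | h
      · exact hlt x h t ht
      · exact hall x h t ht
    rcases aux_above hT hcompl habove with hs | huniv
    · obtain ⟨r, hr⟩ := hRne
      exact hr.1.ne' (hs (Or.inr hr) (Or.inl haL))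
    · obtain ⟨u, hu⟩ := hU
      have huA : u ∈ L ∪ {t : α | a < t ∧ t < b} := huniv.symm ▸ Set.mem_univ u
      rcases huA with h | h
      · exact hLU' u h hu
      · exact hnR u (Or.inr hu) h
  exact ⟨haL, haMax, hbU, hbMin, hRne, h6, h7⟩
end

section
/- Let T be a finite indecomposable partially ordered set with |T| > 2, let a < b in T, let R = {t ∈ T : a < t < b}, and suppose the induced subposet T \ R decomposes as L ⊕ U with L, U nonempty, a ∈ L maximal in L and b ∈ U minimal in U. If there is an r ∈ R that is not above every element of L and not below every element of U, then there exist a' ∈ L maximal in L and b' ∈ U minimal in U such that a' is incomparable to r and b' is incomparable to r; consequently the five pairwise distinct elements a, a', r, b', b induce a subposet whose only strict comparabilities are a < r, r < b, a < b, a < b', a' < b' and a' < b. -/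
/-- With `T \ R = L ⊕ U` as in Statement 14, if some `r ∈ R` is
neither above all of `L` nor below all of `U`, then there are `a'` maximal in `L` and
`b'` minimal in `U`, each incomparable to `r`, such that `{a, a', r, b', b}` are
pairwise distinct and induce exactly the comparabilities
`a < r`, `r < b`, `a < b`, `a < b'`, `a' < b'`, `a' < b` (an `X` as in Figure 1). -/
theorem x_configuration {α : Type*} [PartialOrder α] [Fintype α]
    (hT : IsIndecomposablePoset α) (hcard : 2 < Fintype.card α)
    {a b : α} (hab : a < b)
    {L U : Set α} (hL : L.Nonempty) (hU : U.Nonempty)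
    (hLU : L ∪ U = Set.univ \ {t : α | a < t ∧ t < b})
    (hdisj : Disjoint L U) (hlt : ∀ l ∈ L, ∀ u ∈ U, l < u)
    (haL : a ∈ L) (hamax : ∀ x ∈ L, ¬ a < x)
    (hbU : b ∈ U) (hbmin : ∀ x ∈ U, ¬ x < b)
    {r : α} (hr : a < r ∧ r < b)
    (hra : ¬ ∀ l ∈ L, l < r) (hrb : ¬ ∀ u ∈ U, r < u) :
    ∃ a' ∈ L, ∃ b' ∈ U, (∀ x ∈ L, ¬ a' < x) ∧ (∀ x ∈ U, ¬ x < b') ∧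
      [a, a', r, b', b].Pairwise (· ≠ ·) ∧
      a < r ∧ r < b ∧ a < b ∧ a < b' ∧ a' < b' ∧ a' < b ∧
      (¬ a' ≤ r ∧ ¬ r ≤ a') ∧ (¬ b' ≤ r ∧ ¬ r ≤ b') ∧
      (¬ a ≤ a' ∧ ¬ a' ≤ a) ∧ (¬ b ≤ b' ∧ ¬ b' ≤ b) := by
  obtain ⟨har, hrb2⟩ := hr
  have hrnot : r ∉ L ∪ U := by
    intro h
    rw [hLU] at h
    exact h.2 ⟨har, hrb2⟩
  have keyL : ∀ l ∈ L, ¬ l < r → (¬ l ≤ r ∧ ¬ r ≤ l) := by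
    intro l hl hnl
    refine ⟨fun hle => ?_, fun hle => hamax l hl (lt_of_lt_of_le har hle)⟩
    rcases hle.lt_or_eq with h | h
    · exact hnl h
    · exact hrnot (Or.inl (h ▸ hl))
  have keyU : ∀ u ∈ U, ¬ r < u → (¬ u ≤ r ∧ ¬ r ≤ u) := by
    intro u hu hnu
    refine ⟨fun hle => hbmin u hu (lt_of_le_of_lt hle hrb2), fun hle => ?_⟩
    rcases hle.lt_or_eq with h | h
    · exact hnu h
    · exact hrnot (Or.inr (h.symm ▸ hu))
  push_neg at hra hrb
  obtain ⟨l₀, hl₀L, hl₀⟩ := hra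
  obtain ⟨u₀, hu₀U, hu₀⟩ := hrb
  -- get a' maximal in L above l₀
  obtain ⟨a', ⟨ha'L, hla'⟩, ha'max'⟩ :=
    Set.Finite.exists_maximalFor id {x ∈ L | l₀ ≤ x} (Set.toFinite _)
      ⟨l₀, hl₀L, le_refl _⟩
  have ha'max : ∀ x ∈ L, ¬ a' < x := by
    intro x hx hlt'
    exact lt_irrefl a' (hlt'.trans_le (ha'max' ⟨hx, hla'.trans hlt'.le⟩ hlt'.le))
  have hna'r : ¬ a' < r := fun h => hl₀ (lt_of_le_of_lt hla' h)
  have inca' := keyL a' ha'L hna'r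
  -- get b' minimal in U below u₀
  obtain ⟨b', ⟨hb'U, hub'⟩, hb'min'⟩ :=
    Set.Finite.exists_minimalFor id {x ∈ U | x ≤ u₀} (Set.toFinite _)
      ⟨u₀, hu₀U, le_refl _⟩
  have hb'min : ∀ x ∈ U, ¬ x < b' := by
    intro x hx hlt'
    exact lt_irrefl x (hlt'.trans_le (hb'min' ⟨hx, hlt'.le.trans hub'⟩ hlt'.le))
  have hnrb' : ¬ r < b' := fun h => hu₀ (lt_of_lt_of_le h hub')
  have incb' := keyU b' hb'U hnrb'
  have hab' : a < b' := hlt a haL b' hb'U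
  have ha'b' : a' < b' := hlt a' ha'L b' hb'U
  have ha'b : a' < b := hlt a' ha'L b hbU
  have haa' : a ≠ a' := fun h => inca'.1 (h ▸ har.le)
  have hbb' : b' ≠ b := fun h => incb'.2 (h ▸ hrb2.le)
  have naa' : ¬ a ≤ a' := fun h => hamax a' ha'L (h.lt_of_ne haa')
  have na'a : ¬ a' ≤ a := fun h => inca'.1 (h.trans har.le)
  have nbb' : ¬ b ≤ b' := fun h => incb'.2 (hrb2.le.trans h)
  have nb'b : ¬ b' ≤ b := fun h => hbmin b' hb'U (h.lt_of_ne hbb')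
  refine ⟨a', ha'L, b', hb'U, ha'max, hb'min, ?_, har, hrb2, hab, hab', ha'b', ha'b,
    inca', incb', ⟨naa', na'a⟩, ⟨nbb', nb'b⟩⟩
  have d2 : a ≠ r := har.ne
  have d3 : a ≠ b' := hab'.ne
  have d4 : a ≠ b := hab.ne
  have d5 : a' ≠ r := fun h => inca'.1 h.le
  have d6 : a' ≠ b' := ha'b'.ne
  have d7 : a' ≠ b := ha'b.ne
  have d8 : r ≠ b' := fun h => incb'.2 h.le
  have d9 : r ≠ b := hrb2.ne
  simp [List.pairwise_cons, haa', d2, d3, d4, d5, d6, d7, d8, d9, hbb']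
end
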